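/- arXiv:0902.4038 — 2 statements merged into one kernel-verified Lean document; each statement's English description precedes it below -/
import Mathlib

section
/- Let Γ be a simple graph on vertex set ℕ satisfying the extension property (so Γ is a copy of the random graph). The isomorphism relation on countable simple graphs is Borel reducible to the conjugacy relation on Aut(Γ). Precisely: code simple graphs on ℕ as elements of the Polish space (ℕ × ℕ) → Bool (with Bool discrete and the product topology), letting GR denote the set of codes defining an irreflexive symmetric relation on ℕ, and code maps ℕ → ℕ as elements of the Polish space ℕ → ℕ. Then there exists a Borel-measurable function f from (ℕ × ℕ) → Bool to ℕ → ℕ such that for every R ∈ GR, f(R) is a graph automorphism of Γ, and for all R, S ∈ GR: the graphs coded by R and S are isomorphic if and only if there exists a graph automorphism β of Γ with β ∘ f(R) = f(S) ∘ β. -/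
/-- A simple graph satisfies the extension property (the defining homogeneity property
of the random graph) if for any disjoint finite sets `U, W` of vertices there is a
vertex outside `U ∪ W` adjacent to every vertex of `U` and to no vertex of `W`. -/
def ExtensionProperty {V : Type*} (G : SimpleGraph V) : Prop :=
  ∀ U W : Finset V, Disjoint U W →
    ∃ x, x ∉ U ∧ x ∉ W ∧ (∀ u ∈ U, G.Adj x u) ∧ (∀ w ∈ W, ¬ G.Adj x w)

namespace Stmt12
def trip (k : ℕ) : Finset ℕ × Bool :=
  ((Encodable.decode (α := Finset ℕ × Bool) k.unpair.2)).getD (∅, false)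
def Sset (k : ℕ) : Finset ℕ := (trip k).1
def bbit (k : ℕ) : Bool := (trip k).2
def sig (n : ℕ) : ℕ := if n % 2 = 0 then n else if n % 4 = 1 then n + 2 else n - 2
lemma sig_even {n : ℕ} (h : n % 2 = 0) : sig n = n := by simp [sig, h]
lemma sig_sig (n : ℕ) : sig (sig n) = n := by unfold sig; split_ifs <;> omega
lemma sig_div4 {n : ℕ} (h : n % 2 = 1) : (sig n) / 4 = n / 4 := by unfold sig; split_ifs <;> omega
lemma sig_odd_mod {n : ℕ} (h : n % 2 = 1) : (sig n) % 2 = 1 := by unfold sig; split_ifs <;> omega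
lemma sig_ne_self {n : ℕ} (h : n % 2 = 1) : sig n ≠ n := by unfold sig; split_ifs <;> omega
lemma sig_eq_self_iff {n : ℕ} : sig n = n ↔ n % 2 = 0 := by unfold sig; split_ifs <;> omega
lemma trip_surj (S : Finset ℕ) (b : Bool) (N : ℕ) :
    ∃ k, N ≤ k ∧ Sset k = S ∧ bbit k = b := by
  refine ⟨Nat.pair N (Encodable.encode ((S, b) : Finset ℕ × Bool)), Nat.left_le_pair _ _, ?_, ?_⟩ <;>
    simp [Sset, bbit, trip, Nat.unpair_pair, Encodable.encodek]

/-- Adjacency of odd `u` (the rule-holder) to another vertex `v`. -/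
def oadj (u v : ℕ) : Bool :=
  decide (if u % 4 = 1 then v ∈ Sset (u/4) else sig v ∈ Sset (u/4))

/-- The graph `Δ_R` on ℕ. -/
def dadj (R : (ℕ × ℕ) → Bool) (u v : ℕ) : Bool :=
  if u = v then false
  else if u % 2 = 0 then (if v % 2 = 0 then R (u/2, v/2) else oadj v u)
  else if v % 2 = 0 then oadj u v
  else if u / 4 = v / 4 then bbit (u/4)
  else if u / 4 < v / 4 then oadj v u
  else oadj u v

lemma dadj_self (R : (ℕ × ℕ) → Bool) (u : ℕ) : dadj R u u = false := by simp [dadj]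

lemma oadj_sig_left {u : ℕ} (hu : u % 2 = 1) (v : ℕ) : oadj (sig u) v = oadj u (sig v) := by
  have h4 : (sig u) / 4 = u / 4 := sig_div4 hu
  have : u % 4 = 1 ∨ u % 4 = 3 := by omega
  rcases this with h | h <;>
  · have hs : (sig u) % 4 = (if u % 4 = 1 then 3 else 1) := by unfold sig; split_ifs <;> omega
    simp [oadj, h4, hs, h, sig_sig]

lemma oadj_even_snd {u v : ℕ} (hv : v % 2 = 0) : oadj u v = decide (v ∈ Sset (u/4)) := by
  simp [oadj, sig_even hv]

lemma dadj_symm (R : (ℕ × ℕ) → Bool) (hs : ∀ m n, R (m, n) = R (n, m)) (u v : ℕ) :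
    dadj R u v = dadj R v u := by
  unfold dadj
  by_cases huv : u = v
  · simp [huv]
  have hvu : ¬ v = u := fun h => huv h.symm
  rcases Nat.mod_two_eq_zero_or_one u with hu | hu <;>
    rcases Nat.mod_two_eq_zero_or_one v with hv | hv
  · simp [huv, hvu, hu, hv, hs (u/2) (v/2)]
  · simp [huv, hvu, hu, hv]
  · simp [huv, hvu, hu, hv]
  · simp only [if_neg huv, if_neg hvu]
    have hu' : ¬ u % 2 = 0 := by omega
    have hv' : ¬ v % 2 = 0 := by omega
    simp only [if_neg hu', if_neg hv']
    by_cases h44 : u / 4 = v / 4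
    · rw [if_pos h44, if_pos h44.symm, h44]
    · have h44' : ¬ v / 4 = u / 4 := fun h => h44 h.symm
      simp only [if_neg h44, if_neg h44']
      rcases Nat.lt_or_ge (u/4) (v/4) with hlt | hge
      · simp [hlt, Nat.not_lt.mpr (Nat.le_of_lt hlt)]
      · have hlt' : v / 4 < u / 4 := by omega
        simp [hlt', Nat.not_lt.mpr (Nat.le_of_lt hlt')]

lemma dadj_sig (R : (ℕ × ℕ) → Bool) (u v : ℕ) : dadj R (sig u) (sig v) = dadj R u v := by
  unfold dadj
  have hinj : (sig u = sig v) ↔ (u = v) := by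
    constructor
    · intro h; have := sig_sig u; rw [h, sig_sig] at this; omega
    · intro h; rw [h]
  by_cases huv : u = v
  · simp [huv]
  rw [if_neg huv, if_neg (fun h => huv (hinj.mp h))]
  rcases Nat.mod_two_eq_zero_or_one u with hu | hu <;>
    rcases Nat.mod_two_eq_zero_or_one v with hv | hv
  · simp [sig_even hu, sig_even hv, hu, hv]
  · have hsu : sig u = u := sig_even hu
    have hsv : (sig v) % 2 = 1 := by unfold sig; split_ifs <;> omega
    rw [hsu]
    simp only [if_pos hu, if_neg (by omega : ¬ v % 2 = 0), if_neg (by omega : ¬ (sig v) % 2 = 0)]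
    rw [oadj_sig_left hv, hsu]
  · have hsv : sig v = v := sig_even hv
    have hsu : (sig u) % 2 = 1 := by unfold sig; split_ifs <;> omega
    rw [hsv]
    simp only [if_neg (by omega : ¬ u % 2 = 0), if_neg (by omega : ¬ (sig u) % 2 = 0),
      if_pos hv]
    rw [oadj_sig_left hu, hsv]
  · have hsu : (sig u) % 2 = 1 := by unfold sig; split_ifs <;> omega
    have hsv : (sig v) % 2 = 1 := by unfold sig; split_ifs <;> omega
    have h4u : (sig u) / 4 = u / 4 := sig_div4 hu
    have h4v : (sig v) / 4 = v / 4 := sig_div4 hv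
    simp only [if_neg (by omega : ¬ u % 2 = 0), if_neg (by omega : ¬ (sig u) % 2 = 0),
      if_neg (by omega : ¬ v % 2 = 0), if_neg (by omega : ¬ (sig v) % 2 = 0), h4u, h4v]
    by_cases h44 : u / 4 = v / 4
    · simp [h44]
    · simp only [if_neg h44]
      by_cases hlt : u / 4 < v / 4
      · simp only [if_pos hlt, oadj_sig_left hv, sig_sig]
      · simp only [if_neg hlt, oadj_sig_left hu, sig_sig]

lemma dadj_even_even (R : (ℕ × ℕ) → Bool) {u v : ℕ} (h : u ≠ v) (hu : u % 2 = 0)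
    (hv : v % 2 = 0) : dadj R u v = R (u/2, v/2) := by
  simp [dadj, h, hu, hv]

lemma dadj_odd_even (R : (ℕ × ℕ) → Bool) {u v : ℕ} (hu : u % 2 = 1) (hv : v % 2 = 0) :
    dadj R u v = decide (v ∈ Sset (u/4)) := by
  rw [dadj, if_neg (by omega), if_neg (by omega), if_pos hv, oadj_even_snd hv]

lemma dadj_odd_odd_lt (R : (ℕ × ℕ) → Bool) {u v : ℕ} (hu : u % 2 = 1) (hv : v % 2 = 1)
    (hlt : v / 4 < u / 4) : dadj R u v = oadj u v := by
  rw [dadj, if_neg (by omega), if_neg (by omega), if_neg (by omega),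
    if_neg (by omega), if_neg (by omega)]

lemma dadj_same_orbit (R : (ℕ × ℕ) → Bool) {u v : ℕ} (h : u ≠ v) (hu : u % 2 = 1)
    (hv : v % 2 = 1) (h4 : u / 4 = v / 4) : dadj R u v = bbit (u/4) := by
  rw [dadj, if_neg h, if_neg (by omega), if_neg (by omega), if_pos h4]

/-- The key witness lemma: realizing any requirement over a finite set. -/
lemma exists_witness (R : (ℕ × ℕ) → Bool) (T : Finset ℕ) (b : Bool) (A : Finset ℕ) :
    ∃ x, x % 2 = 1 ∧ x ∉ A ∧ sig x ∉ A ∧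
      (∀ a ∈ A, dadj R x a = decide (a ∈ T)) ∧
      (∀ v, v % 2 = 0 → dadj R x v = decide (v ∈ T)) ∧
      dadj R x (sig x) = b := by
  obtain ⟨N, hN⟩ : ∃ N, ∀ a ∈ A, a < 4 * N :=
    ⟨A.sup id + 1, fun a ha => by have := Finset.le_sup (f := id) ha; simp at this; omega⟩
  obtain ⟨k, hkN, hkS, hkb⟩ := trip_surj T b (N + 1)
  refine ⟨4 * k + 1, by omega, ?_, ?_, ?_, ?_, ?_⟩
  · intro h; have := hN _ h; omega
  · intro h
    have hx : sig (4 * k + 1) = 4 * k + 3 := by unfold sig; split_ifs <;> omega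
    rw [hx] at h; have := hN _ h; omega
  · intro a ha
    have ha' : a < 4 * N := hN a ha
    have hx1 : (4 * k + 1) % 2 = 1 := by omega
    rcases Nat.mod_two_eq_zero_or_one a with haa | haa
    · rw [dadj_odd_even R hx1 haa]
      congr 1
      · simp [(by omega : (4 * k + 1) / 4 = k), hkS]
    · have hlt : a / 4 < (4 * k + 1) / 4 := by omega
      rw [dadj_odd_odd_lt R hx1 haa hlt, oadj]
      simp [(by omega : (4 * k + 1) / 4 = k), (by omega : (4 * k + 1) % 4 = 1), hkS]
  · intro v hv
    rw [dadj_odd_even R (by omega) hv]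
    simp [(by omega : (4 * k + 1) / 4 = k), hkS]
  · have hx : sig (4 * k + 1) = 4 * k + 3 := by unfold sig; split_ifs <;> omega
    rw [hx, dadj_same_orbit R (by omega) (by omega) (by omega) (by omega : (4*k+1)/4 = (4*k+3)/4)]
    simp [(by omega : (4 * k + 1) / 4 = k), hkb]

/-- Extension property of `Δ_R` (in disjoint-finite-sets form). -/
lemma dadj_ext (R : (ℕ × ℕ) → Bool) (U W : Finset ℕ) (h : Disjoint U W) :
    ∃ x, x ∉ U ∧ x ∉ W ∧ (∀ u ∈ U, dadj R x u = true) ∧ (∀ w ∈ W, dadj R x w = false) := by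
  obtain ⟨x, _, hxA, _, hadj, _, _⟩ := exists_witness R U false (U ∪ W)
  refine ⟨x, fun hh => hxA (Finset.mem_union_left _ hh),
    fun hh => hxA (Finset.mem_union_right _ hh), ?_, ?_⟩
  · intro u hu; rw [hadj u (Finset.mem_union_left _ hu)]; simp [hu]
  · intro w hw; rw [hadj w (Finset.mem_union_right _ hw)]
    simp [Finset.disjoint_right.mp h hw]

section BF
variable (Γ : SimpleGraph ℕ)

def gdom (q : List (ℕ × ℕ)) : List ℕ := q.map Prod.fst
def gran (q : List (ℕ × ℕ)) : List ℕ := q.map Prod.snd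

def matchD (R : (ℕ × ℕ) → Bool) (q : List (ℕ × ℕ)) (x y : ℕ) : Prop :=
  y ∉ gran q ∧ ∀ c ∈ q, (dadj R x c.1 = true ↔ Γ.Adj y c.2)

def matchR (R : (ℕ × ℕ) → Bool) (q : List (ℕ × ℕ)) (x y : ℕ) : Prop :=
  x ∉ gdom q ∧ ∀ c ∈ q, (dadj R x c.1 = true ↔ Γ.Adj y c.2)

open Classical in
noncomputable def stepD (R : (ℕ × ℕ) → Bool) (q : List (ℕ × ℕ)) (n : ℕ) : List (ℕ × ℕ) :=
  if n ∈ gdom q then q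
  else if h : ∃ y, matchD Γ R q n y then (n, Nat.find h) :: q else q

open Classical in
noncomputable def stepR (R : (ℕ × ℕ) → Bool) (q : List (ℕ × ℕ)) (n : ℕ) : List (ℕ × ℕ) :=
  if n ∈ gran q then q
  else if h : ∃ x, matchR Γ R q x n then (Nat.find h, n) :: q else q

noncomputable def pseq (R : (ℕ × ℕ) → Bool) : ℕ → List (ℕ × ℕ)
  | 0 => []
  | s + 1 => stepR Γ R (stepD Γ R (pseq R s) s) s

noncomputable def th (R : (ℕ × ℕ) → Bool) (n : ℕ) : ℕ :=
  (((pseq Γ R (n + 1)).find? (fun c => c.1 == n)).map Prod.snd).getD 0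

noncomputable def thinv (R : (ℕ × ℕ) → Bool) (n : ℕ) : ℕ :=
  (((pseq Γ R (n + 1)).find? (fun c => c.2 == n)).map Prod.fst).getD 0

noncomputable def fmap (R : (ℕ × ℕ) → Bool) : ℕ → ℕ := fun n => th Γ R (sig (thinv Γ R n))

/-! ### Measurability -/

lemma meas_dadj (u v : ℕ) : Measurable fun R : (ℕ × ℕ) → Bool => dadj R u v := by
  unfold dadj
  split_ifs <;> first
    | exact measurable_const
    | exact measurable_pi_apply _

lemma measSet_matchD (q : List (ℕ × ℕ)) (x y : ℕ) :
    MeasurableSet {R : (ℕ × ℕ) → Bool | matchD Γ R q x y} := by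
  have heq : {R : (ℕ × ℕ) → Bool | matchD Γ R q x y} =
      {R : (ℕ × ℕ) → Bool | y ∉ gran q} ∩
        ⋂ c ∈ {c : ℕ × ℕ | c ∈ q},
          (fun R : (ℕ × ℕ) → Bool => dadj R x c.1) ⁻¹' {b : Bool | b = true ↔ Γ.Adj y c.2} := by
    ext R
    simp only [matchD, Set.mem_inter_iff, Set.mem_setOf_eq, Set.mem_iInter, Set.mem_preimage]
    try tauto
  rw [heq]
  refine MeasurableSet.inter ?_
    (MeasurableSet.biInter (Set.to_countable _) fun c _ => (meas_dadj x c.1) trivial)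
  by_cases hy : y ∈ gran q <;> simp [hy]

lemma measSet_matchR (q : List (ℕ × ℕ)) (x y : ℕ) :
    MeasurableSet {R : (ℕ × ℕ) → Bool | matchR Γ R q x y} := by
  have heq : {R : (ℕ × ℕ) → Bool | matchR Γ R q x y} =
      {R : (ℕ × ℕ) → Bool | x ∉ gdom q} ∩
        ⋂ c ∈ {c : ℕ × ℕ | c ∈ q},
          (fun R : (ℕ × ℕ) → Bool => dadj R x c.1) ⁻¹' {b : Bool | b = true ↔ Γ.Adj y c.2} := by
    ext R
    simp only [matchR, Set.mem_inter_iff, Set.mem_setOf_eq, Set.mem_iInter, Set.mem_preimage]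
    try tauto
  rw [heq]
  refine MeasurableSet.inter ?_
    (MeasurableSet.biInter (Set.to_countable _) fun c _ => (meas_dadj x c.1) trivial)
  by_cases hy : x ∈ gdom q <;> simp [hy]

open Classical in
lemma meas_stepD (q q' : List (ℕ × ℕ)) (n : ℕ) :
    MeasurableSet {R : (ℕ × ℕ) → Bool | stepD Γ R q n = q'} := by
  by_cases hn : n ∈ gdom q
  · simp only [stepD, if_pos hn]
    by_cases h : q = q' <;> simp [h]
  · simp only [stepD, if_neg hn]
    by_cases hc : ∃ y, q' = (n, y) :: q
    · obtain ⟨y, rfl⟩ := hc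
      have heq : {R : (ℕ × ℕ) → Bool |
            (if h : ∃ y, matchD Γ R q n y then (n, Nat.find h) :: q else q) = (n, y) :: q} =
          {R : (ℕ × ℕ) → Bool | matchD Γ R q n y} ∩
            ⋂ z ∈ Finset.range y, {R : (ℕ × ℕ) → Bool | matchD Γ R q n z}ᶜ := by
        ext R
        simp only [Set.mem_setOf_eq, Set.mem_inter_iff, Set.mem_iInter, Set.mem_compl_iff,
          Finset.mem_range]
        constructor
        · intro hR
          by_cases h : ∃ y, matchD Γ R q n y
          · rw [dif_pos h] at hR
            have hy : Nat.find h = y := by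
              have h1 := List.head_eq_of_cons_eq hR
              injection h1 with h2 h3
            have := (Nat.find_eq_iff h).mp hy
            exact ⟨this.1, fun z hz => this.2 z hz⟩
          · rw [dif_neg h] at hR
            exact absurd hR.symm (List.cons_ne_self _ _)
        · rintro ⟨h1, h2⟩
          have h : ∃ y, matchD Γ R q n y := ⟨y, h1⟩
          rw [dif_pos h]
          have : Nat.find h = y := (Nat.find_eq_iff h).mpr ⟨h1, fun z hz => h2 z hz⟩
          rw [this]
      rw [heq]
      exact (measSet_matchD Γ q n y).inter
        (MeasurableSet.biInter (Set.to_countable _)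
          fun z _ => (measSet_matchD Γ q n z).compl)
    · have heq : {R : (ℕ × ℕ) → Bool |
            (if h : ∃ y, matchD Γ R q n y then (n, Nat.find h) :: q else q) = q'} =
          (⋃ y, {R : (ℕ × ℕ) → Bool | matchD Γ R q n y})ᶜ ∩ {R : (ℕ × ℕ) → Bool | q = q'} := by
        ext R
        simp only [Set.mem_setOf_eq, Set.mem_inter_iff, Set.mem_compl_iff, Set.mem_iUnion]
        constructor
        · intro hR
          by_cases h : ∃ y, matchD Γ R q n y
          · rw [dif_pos h] at hR
            exact absurd ⟨Nat.find h, hR.symm⟩ hc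
          · rw [dif_neg h] at hR
            exact ⟨fun ⟨y, hy⟩ => h ⟨y, hy⟩, hR⟩
        · rintro ⟨h1, h2⟩
          rw [dif_neg (fun ⟨y, hy⟩ => h1 ⟨y, hy⟩)]
          exact h2
      rw [heq]
      refine MeasurableSet.inter ((MeasurableSet.iUnion fun y => measSet_matchD Γ q n y).compl) ?_
      by_cases h : q = q' <;> simp [h]

open Classical in
lemma meas_stepR (q q' : List (ℕ × ℕ)) (n : ℕ) :
    MeasurableSet {R : (ℕ × ℕ) → Bool | stepR Γ R q n = q'} := by
  by_cases hn : n ∈ gran q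
  · simp only [stepR, if_pos hn]
    by_cases h : q = q' <;> simp [h]
  · simp only [stepR, if_neg hn]
    by_cases hc : ∃ x, q' = (x, n) :: q
    · obtain ⟨y, rfl⟩ := hc
      have heq : {R : (ℕ × ℕ) → Bool |
            (if h : ∃ x, matchR Γ R q x n then (Nat.find h, n) :: q else q) = (y, n) :: q} =
          {R : (ℕ × ℕ) → Bool | matchR Γ R q y n} ∩
            ⋂ z ∈ Finset.range y, {R : (ℕ × ℕ) → Bool | matchR Γ R q z n}ᶜ := by
        ext R
        simp only [Set.mem_setOf_eq, Set.mem_inter_iff, Set.mem_iInter, Set.mem_compl_iff,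
          Finset.mem_range]
        constructor
        · intro hR
          by_cases h : ∃ x, matchR Γ R q x n
          · rw [dif_pos h] at hR
            have hy : Nat.find h = y := by
              have h1 := List.head_eq_of_cons_eq hR
              injection h1 with h2 h3
            have := (Nat.find_eq_iff h).mp hy
            exact ⟨this.1, fun z hz => this.2 z hz⟩
          · rw [dif_neg h] at hR
            exact absurd hR.symm (List.cons_ne_self _ _)
        · rintro ⟨h1, h2⟩
          have h : ∃ x, matchR Γ R q x n := ⟨y, h1⟩
          rw [dif_pos h]
          have : Nat.find h = y := (Nat.find_eq_iff h).mpr ⟨h1, fun z hz => h2 z hz⟩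
          rw [this]
      rw [heq]
      exact (measSet_matchR Γ q y n).inter
        (MeasurableSet.biInter (Set.to_countable _)
          fun z _ => (measSet_matchR Γ q z n).compl)
    · have heq : {R : (ℕ × ℕ) → Bool |
            (if h : ∃ x, matchR Γ R q x n then (Nat.find h, n) :: q else q) = q'} =
          (⋃ y, {R : (ℕ × ℕ) → Bool | matchR Γ R q y n})ᶜ ∩ {R : (ℕ × ℕ) → Bool | q = q'} := by
        ext R
        simp only [Set.mem_setOf_eq, Set.mem_inter_iff, Set.mem_compl_iff, Set.mem_iUnion]
        constructor
        · intro hR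
          by_cases h : ∃ x, matchR Γ R q x n
          · rw [dif_pos h] at hR
            exact absurd ⟨Nat.find h, hR.symm⟩ hc
          · rw [dif_neg h] at hR
            exact ⟨fun ⟨y, hy⟩ => h ⟨y, hy⟩, hR⟩
        · rintro ⟨h1, h2⟩
          rw [dif_neg (fun ⟨y, hy⟩ => h1 ⟨y, hy⟩)]
          exact h2
      rw [heq]
      refine MeasurableSet.inter ((MeasurableSet.iUnion fun y => measSet_matchR Γ q y n).compl) ?_
      by_cases h : q = q' <;> simp [h]

lemma meas_pseq (s : ℕ) (q : List (ℕ × ℕ)) :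
    MeasurableSet {R : (ℕ × ℕ) → Bool | pseq Γ R s = q} := by
  induction s generalizing q with
  | zero =>
    by_cases h : ([] : List (ℕ × ℕ)) = q <;> simp [pseq, h]
  | succ s ih =>
    have heq : {R : (ℕ × ℕ) → Bool | pseq Γ R (s + 1) = q} =
        ⋃ q1 : List (ℕ × ℕ), ⋃ q2 : List (ℕ × ℕ),
          ({R : (ℕ × ℕ) → Bool | pseq Γ R s = q1} ∩
            ({R : (ℕ × ℕ) → Bool | stepD Γ R q1 s = q2} ∩
             {R : (ℕ × ℕ) → Bool | stepR Γ R q2 s = q})) := by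
      ext R
      simp only [Set.mem_setOf_eq, Set.mem_iUnion, Set.mem_inter_iff]
      constructor
      · intro hR
        exact ⟨pseq Γ R s, stepD Γ R (pseq Γ R s) s, rfl, rfl, by rw [← hR]; rfl⟩
      · rintro ⟨q1, q2, h1, h2, h3⟩
        show stepR Γ R (stepD Γ R (pseq Γ R s) s) s = q
        rw [h1, h2]; exact h3
    rw [heq]
    exact MeasurableSet.iUnion fun q1 => MeasurableSet.iUnion fun q2 =>
      (ih q1).inter ((meas_stepD Γ q1 q2 s).inter (meas_stepR Γ q2 q s))

lemma meas_th_event (n a : ℕ) : MeasurableSet {R : (ℕ × ℕ) → Bool | th Γ R n = a} := by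
  have heq : {R : (ℕ × ℕ) → Bool | th Γ R n = a} =
      ⋃ q ∈ {q : List (ℕ × ℕ) | ((q.find? (fun c => c.1 == n)).map Prod.snd).getD 0 = a},
        {R : (ℕ × ℕ) → Bool | pseq Γ R (n + 1) = q} := by
    ext R
    simp only [th, Set.mem_setOf_eq, Set.mem_iUnion]
    constructor
    · intro hR
      exact ⟨pseq Γ R (n + 1), hR, rfl⟩
    · rintro ⟨q, hq, hq2⟩
      rw [hq2]; exact hq
  rw [heq]
  exact MeasurableSet.biUnion (Set.to_countable _) fun q _ => meas_pseq Γ (n + 1) q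

lemma meas_thinv_event (n a : ℕ) : MeasurableSet {R : (ℕ × ℕ) → Bool | thinv Γ R n = a} := by
  have heq : {R : (ℕ × ℕ) → Bool | thinv Γ R n = a} =
      ⋃ q ∈ {q : List (ℕ × ℕ) | ((q.find? (fun c => c.2 == n)).map Prod.fst).getD 0 = a},
        {R : (ℕ × ℕ) → Bool | pseq Γ R (n + 1) = q} := by
    ext R
    simp only [thinv, Set.mem_setOf_eq, Set.mem_iUnion]
    constructor
    · intro hR
      exact ⟨pseq Γ R (n + 1), hR, rfl⟩
    · rintro ⟨q, hq, hq2⟩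
      rw [hq2]; exact hq
  rw [heq]
  exact MeasurableSet.biUnion (Set.to_countable _) fun q _ => meas_pseq Γ (n + 1) q

lemma meas_fmap : Measurable (fmap Γ) := by
  rw [measurable_pi_iff]
  intro n
  apply measurable_to_countable'
  intro a
  have heq : (fun R => fmap Γ R n) ⁻¹' {a} =
      ⋃ y, ({R : (ℕ × ℕ) → Bool | thinv Γ R n = y} ∩
        {R : (ℕ × ℕ) → Bool | th Γ R (sig y) = a}) := by
    ext R
    simp only [Set.mem_preimage, Set.mem_singleton_iff, fmap, Set.mem_iUnion, Set.mem_inter_iff,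
      Set.mem_setOf_eq]
    constructor
    · intro hR
      exact ⟨thinv Γ R n, rfl, hR⟩
    · rintro ⟨y, h1, h2⟩
      rw [h1]; exact h2
  rw [heq]
  exact MeasurableSet.iUnion fun y => (meas_thinv_event Γ n y).inter (meas_th_event Γ (sig y) a)

end BF

/-! ### Correctness of the canonical back-and-forth -/

def Good (Γ : SimpleGraph ℕ) (R : (ℕ × ℕ) → Bool) (q : List (ℕ × ℕ)) : Prop :=
  ∀ c ∈ q, ∀ c' ∈ q,
    (c.1 = c'.1 ↔ c.2 = c'.2) ∧ (dadj R c.1 c'.1 = true ↔ Γ.Adj c.2 c'.2)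

variable {Γ : SimpleGraph ℕ} {R : (ℕ × ℕ) → Bool}

lemma mem_gdom {q : List (ℕ × ℕ)} {n : ℕ} : n ∈ gdom q ↔ ∃ c ∈ q, c.1 = n := by
  simp [gdom]

lemma mem_gran {q : List (ℕ × ℕ)} {n : ℕ} : n ∈ gran q ↔ ∃ c ∈ q, c.2 = n := by
  simp [gran]

lemma good_cons {q : List (ℕ × ℕ)} {x y : ℕ}
    (hs : ∀ m n, R (m, n) = R (n, m))
    (hq : Good Γ R q) (hx : x ∉ gdom q) (hy : y ∉ gran q)
    (hmatch : ∀ c ∈ q, (dadj R x c.1 = true ↔ Γ.Adj y c.2)) :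
    Good Γ R ((x, y) :: q) := by
  intro c hc c' hc'
  rcases List.mem_cons.mp hc with rfl | hc <;> rcases List.mem_cons.mp hc' with rfl | hc'
  · exact ⟨by simp, by simp [dadj_self]⟩
  · constructor
    · constructor
      · intro h; exact absurd (mem_gdom.mpr ⟨c', hc', h.symm⟩) hx
      · intro h; exact absurd (mem_gran.mpr ⟨c', hc', h.symm⟩) hy
    · exact hmatch c' hc'
  · constructor
    · constructor
      · intro h; exact absurd (mem_gdom.mpr ⟨c, hc, h⟩) hx
      · intro h; exact absurd (mem_gran.mpr ⟨c, hc, h⟩) hy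
    · rw [dadj_symm R hs, Γ.adj_comm]
      exact hmatch c hc
  · exact hq c hc c' hc'

lemma good_stepD (hΓ : ExtensionProperty Γ)
    (hs : ∀ m n, R (m, n) = R (n, m))
    {q : List (ℕ × ℕ)} (hq : Good Γ R q) (n : ℕ) :
    Good Γ R (stepD Γ R q n) ∧ n ∈ gdom (stepD Γ R q n) := by
  classical
  by_cases hn : n ∈ gdom q
  · rw [stepD, if_pos hn]
    exact ⟨hq, hn⟩
  · have hex : ∃ y, matchD Γ R q n y := by
      set U := Finset.image Prod.snd ((q.toFinset).filter (fun c => dadj R n c.1 = true)) with hU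
      set W := Finset.image Prod.snd ((q.toFinset).filter (fun c => ¬ dadj R n c.1 = true)) with hW
      have hdisj : Disjoint U W := by
        rw [Finset.disjoint_left]
        intro y hyU hyW
        obtain ⟨c, hcq, rfl⟩ := Finset.mem_image.mp hyU
        obtain ⟨c', hc'q, hcc'⟩ := Finset.mem_image.mp hyW
        rw [Finset.mem_filter, List.mem_toFinset] at hcq hc'q
        have h1 := (hq c hcq.1 c' hc'q.1).1
        have := h1.mpr hcc'.symm
        rw [this] at hcq
        exact hc'q.2 hcq.2
      obtain ⟨y, hyU, hyW, hadj, hnadj⟩ := hΓ U W hdisj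
      refine ⟨y, ?_, ?_⟩
      · intro hyq
        obtain ⟨c, hcq, rfl⟩ := mem_gran.mp hyq
        by_cases hd : dadj R n c.1 = true
        · exact hyU (Finset.mem_image.mpr ⟨c, Finset.mem_filter.mpr ⟨List.mem_toFinset.mpr hcq, hd⟩, rfl⟩)
        · exact hyW (Finset.mem_image.mpr ⟨c, Finset.mem_filter.mpr ⟨List.mem_toFinset.mpr hcq, hd⟩, rfl⟩)
      · intro c hcq
        by_cases hd : dadj R n c.1 = true
        · have := hadj c.2 (Finset.mem_image.mpr ⟨c, Finset.mem_filter.mpr ⟨List.mem_toFinset.mpr hcq, hd⟩, rfl⟩)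
          simp [hd, this]
        · have := hnadj c.2 (Finset.mem_image.mpr ⟨c, Finset.mem_filter.mpr ⟨List.mem_toFinset.mpr hcq, hd⟩, rfl⟩)
          simp [hd, this]
    rw [stepD, if_neg hn, dif_pos hex]
    obtain ⟨hy, hmatch⟩ := Nat.find_spec hex
    constructor
    · exact good_cons hs hq hn hy hmatch
    · exact mem_gdom.mpr ⟨(n, Nat.find hex), List.mem_cons_self, rfl⟩

lemma good_stepR (hs : ∀ m n, R (m, n) = R (n, m))
    {q : List (ℕ × ℕ)} (hq : Good Γ R q) (n : ℕ) :
    Good Γ R (stepR Γ R q n) ∧ n ∈ gran (stepR Γ R q n) := by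
  classical
  by_cases hn : n ∈ gran q
  · rw [stepR, if_pos hn]
    exact ⟨hq, hn⟩
  · have hex : ∃ x, matchR Γ R q x n := by
      set U := Finset.image Prod.fst ((q.toFinset).filter (fun c => Γ.Adj n c.2)) with hU
      set W := Finset.image Prod.fst ((q.toFinset).filter (fun c => ¬ Γ.Adj n c.2)) with hW
      have hdisj : Disjoint U W := by
        rw [Finset.disjoint_left]
        intro x hxU hxW
        obtain ⟨c, hcq, rfl⟩ := Finset.mem_image.mp hxU
        obtain ⟨c', hc'q, hcc'⟩ := Finset.mem_image.mp hxW
        rw [Finset.mem_filter, List.mem_toFinset] at hcq hc'q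
        have h1 := (hq c hcq.1 c' hc'q.1).1
        have := h1.mp hcc'.symm
        rw [this] at hcq
        exact hc'q.2 hcq.2
      obtain ⟨x, hxU, hxW, hadj, hnadj⟩ := dadj_ext R U W hdisj
      refine ⟨x, ?_, ?_⟩
      · intro hxq
        obtain ⟨c, hcq, rfl⟩ := mem_gdom.mp hxq
        by_cases hd : Γ.Adj n c.2
        · exact hxU (Finset.mem_image.mpr ⟨c, Finset.mem_filter.mpr ⟨List.mem_toFinset.mpr hcq, hd⟩, rfl⟩)
        · exact hxW (Finset.mem_image.mpr ⟨c, Finset.mem_filter.mpr ⟨List.mem_toFinset.mpr hcq, hd⟩, rfl⟩)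
      · intro c hcq
        by_cases ha : Γ.Adj n c.2
        · have := hadj c.1 (Finset.mem_image.mpr ⟨c, Finset.mem_filter.mpr ⟨List.mem_toFinset.mpr hcq, ha⟩, rfl⟩)
          simp [this, ha]
        · have := hnadj c.1 (Finset.mem_image.mpr ⟨c, Finset.mem_filter.mpr ⟨List.mem_toFinset.mpr hcq, ha⟩, rfl⟩)
          simp [this, ha]
    rw [stepR, if_neg hn, dif_pos hex]
    obtain ⟨hx, hmatch⟩ := Nat.find_spec hex
    constructor
    · exact good_cons hs hq hx hn hmatch
    · exact mem_gran.mpr ⟨(Nat.find hex, n), List.mem_cons_self, rfl⟩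

lemma mem_stepD {q : List (ℕ × ℕ)} {c : ℕ × ℕ} (h : c ∈ q) (n : ℕ) : c ∈ stepD Γ R q n := by
  classical
  rw [stepD]
  split_ifs <;> simp [h]

lemma mem_stepR {q : List (ℕ × ℕ)} {c : ℕ × ℕ} (h : c ∈ q) (n : ℕ) : c ∈ stepR Γ R q n := by
  classical
  rw [stepR]
  split_ifs <;> simp [h]

lemma gdom_stepR {q : List (ℕ × ℕ)} {m : ℕ} (h : m ∈ gdom q) (n : ℕ) :
    m ∈ gdom (stepR Γ R q n) := by
  obtain ⟨c, hc, hc1⟩ := mem_gdom.mp h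
  exact mem_gdom.mpr ⟨c, mem_stepR hc n, hc1⟩

section CanIso
variable (hΓ : ExtensionProperty Γ) (hs : ∀ m n, R (m, n) = R (n, m))
include hΓ hs

lemma pseq_good (s : ℕ) : Good Γ R (pseq Γ R s) := by
  induction s with
  | zero => intro c hc; simp [pseq] at hc
  | succ s ih =>
    exact (good_stepR hs (good_stepD hΓ hs ih s).1 s).1

omit hΓ hs in
lemma pseq_mono {s t : ℕ} (hst : s ≤ t) {c : ℕ × ℕ} (h : c ∈ pseq Γ R s) : c ∈ pseq Γ R t := by
  induction t with
  | zero =>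
    have : s = 0 := Nat.le_zero.mp hst
    rwa [← this]
  | succ t ih =>
    rcases Nat.lt_or_ge s (t + 1) with hlt | hge
    · have := ih (by omega)
      exact mem_stepR (mem_stepD this t) t
    · have : s = t + 1 := by omega
      rwa [← this]

lemma mem_dom_pseq (n : ℕ) : n ∈ gdom (pseq Γ R (n + 1)) := by
  have h1 := good_stepD hΓ hs (pseq_good hΓ hs n) n
  exact gdom_stepR h1.2 n

lemma mem_ran_pseq (n : ℕ) : n ∈ gran (pseq Γ R (n + 1)) := by
  have h1 := good_stepD hΓ hs (pseq_good hΓ hs n) n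
  exact (good_stepR hs h1.1 n).2

lemma th_mem (n : ℕ) : (n, th Γ R n) ∈ pseq Γ R (n + 1) := by
  have h := mem_dom_pseq hΓ hs n
  obtain ⟨c, hc, hc1⟩ := mem_gdom.mp h
  have hsome : ((pseq Γ R (n + 1)).find? (fun c => c.1 == n)).isSome :=
    List.find?_isSome.mpr ⟨c, hc, by simp [hc1]⟩
  obtain ⟨c₀, hc₀⟩ := Option.isSome_iff_exists.mp hsome
  have h1 : c₀.1 = n := by simpa using List.find?_some hc₀
  have h2 := List.mem_of_find?_eq_some hc₀
  have h3 : (n, th Γ R n) = c₀ := by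
    rw [th, hc₀]
    exact Prod.ext h1.symm rfl
  rw [h3]
  exact h2

lemma thinv_mem (n : ℕ) : (thinv Γ R n, n) ∈ pseq Γ R (n + 1) := by
  have h := mem_ran_pseq hΓ hs n
  obtain ⟨c, hc, hc1⟩ := mem_gran.mp h
  have hsome : ((pseq Γ R (n + 1)).find? (fun c => c.2 == n)).isSome :=
    List.find?_isSome.mpr ⟨c, hc, by simp [hc1]⟩
  obtain ⟨c₀, hc₀⟩ := Option.isSome_iff_exists.mp hsome
  have h1 : c₀.2 = n := by simpa using List.find?_some hc₀
  have h2 := List.mem_of_find?_eq_some hc₀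
  have h3 : (thinv Γ R n, n) = c₀ := by
    rw [thinv, hc₀]
    exact Prod.ext rfl h1.symm
  rw [h3]
  exact h2

lemma grel_good {c c' : ℕ × ℕ} {s t : ℕ} (h : c ∈ pseq Γ R s) (h' : c' ∈ pseq Γ R t) :
    (c.1 = c'.1 ↔ c.2 = c'.2) ∧ (dadj R c.1 c'.1 = true ↔ Γ.Adj c.2 c'.2) := by
  have h1 : c ∈ pseq Γ R (max s t) := pseq_mono (le_max_left _ _) h
  have h2 : c' ∈ pseq Γ R (max s t) := pseq_mono (le_max_right _ _) h'
  exact pseq_good hΓ hs (max s t) c h1 c' h2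

attribute [irreducible] pseq stepD stepR th thinv matchD matchR

lemma thinv_th (m : ℕ) : thinv Γ R (th Γ R m) = m := by
  have h1 := th_mem hΓ hs m
  have h2 := thinv_mem hΓ hs (th Γ R m)
  exact ((grel_good hΓ hs h2 h1).1.mpr rfl)

lemma th_thinv (n : ℕ) : th Γ R (thinv Γ R n) = n := by
  have h1 := thinv_mem hΓ hs n
  have h2 := th_mem hΓ hs (thinv Γ R n)
  exact ((grel_good hΓ hs h2 h1).1.mp rfl)

lemma th_adj (m n : ℕ) : dadj R m n = true ↔ Γ.Adj (th Γ R m) (th Γ R n) := by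
  have h1 := th_mem hΓ hs m
  have h2 := th_mem hΓ hs n
  exact (grel_good hΓ hs h1 h2).2

lemma fmap_invol (n : ℕ) : fmap Γ R (fmap Γ R n) = n := by
  rw [fmap, fmap, thinv_th hΓ hs, sig_sig, th_thinv hΓ hs]

lemma fmap_adj (a b : ℕ) : Γ.Adj (fmap Γ R a) (fmap Γ R b) ↔ Γ.Adj a b := by
  rw [fmap, fmap, ← th_adj hΓ hs, dadj_sig, th_adj hΓ hs, th_thinv hΓ hs, th_thinv hΓ hs]

lemma fmap_th (u : ℕ) : fmap Γ R (th Γ R u) = th Γ R (sig u) := by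
  rw [fmap, thinv_th hΓ hs]

lemma thinv_fmap (n : ℕ) : thinv Γ R (fmap Γ R n) = sig (thinv Γ R n) := by
  rw [fmap, thinv_th hΓ hs]

end CanIso

/-! ### The pair back-and-forth -/

lemma dadj_sig_left (R : (ℕ × ℕ) → Bool) (u v : ℕ) :
    dadj R (sig u) v = dadj R u (sig v) := by
  conv_lhs => rw [← sig_sig v]
  rw [dadj_sig]

def GoodP (R S : (ℕ × ℕ) → Bool) (e : ℕ ≃ ℕ) (q : List (ℕ × ℕ)) : Prop :=
  (∀ c ∈ q, c.1 % 2 = 1 ∧ c.2 % 2 = 1) ∧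
  (∀ c ∈ q, (sig c.1, sig c.2) ∈ q) ∧
  (∀ c ∈ q, ∀ c' ∈ q, (c.1 = c'.1 ↔ c.2 = c'.2)) ∧
  (∀ c ∈ q, ∀ c' ∈ q, dadj R c.1 c'.1 = dadj S c.2 c'.2) ∧
  (∀ c ∈ q, ∀ n : ℕ, dadj R c.1 (2 * n) = dadj S c.2 (2 * e n))

lemma goodP_nil (R S : (ℕ × ℕ) → Bool) (e : ℕ ≃ ℕ) : GoodP R S e [] := by
  refine ⟨?_, ?_, ?_, ?_, ?_⟩ <;> intro c hc <;> simp at hc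

lemma goodP_flip {R S : (ℕ × ℕ) → Bool} {e : ℕ ≃ ℕ} {q : List (ℕ × ℕ)}
    (h : GoodP R S e q) : GoodP S R e.symm (q.map Prod.swap) := by
  obtain ⟨h1, h2, h3, h4, h5⟩ := h
  refine ⟨?_, ?_, ?_, ?_, ?_⟩
  · intro c hc
    obtain ⟨c', hc', rfl⟩ := List.mem_map.mp hc
    exact ⟨(h1 c' hc').2, (h1 c' hc').1⟩
  · intro c hc
    obtain ⟨c', hc', rfl⟩ := List.mem_map.mp hc
    exact List.mem_map.mpr ⟨(sig c'.1, sig c'.2), h2 c' hc', rfl⟩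
  · intro c hc c' hc'
    obtain ⟨d, hd, rfl⟩ := List.mem_map.mp hc
    obtain ⟨d', hd', rfl⟩ := List.mem_map.mp hc'
    exact (h3 d hd d' hd').symm
  · intro c hc c' hc'
    obtain ⟨d, hd, rfl⟩ := List.mem_map.mp hc
    obtain ⟨d', hd', rfl⟩ := List.mem_map.mp hc'
    exact (h4 d hd d' hd').symm
  · intro c hc n
    obtain ⟨d, hd, rfl⟩ := List.mem_map.mp hc
    have := h5 d hd (e.symm n)
    rw [e.apply_symm_apply] at this
    exact this.symm

lemma extendP {R S : (ℕ × ℕ) → Bool} {e : ℕ ≃ ℕ} {q : List (ℕ × ℕ)}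
    (hsR : ∀ m n, R (m, n) = R (n, m)) (hsS : ∀ m n, S (m, n) = S (n, m))
    (hq : GoodP R S e q) {x : ℕ} (hx1 : x % 2 = 1) (hx : x ∉ gdom q) :
    ∃ y, GoodP R S e ((x, y) :: (sig x, sig y) :: q) ∧ y ∉ gran q := by
  classical
  obtain ⟨hpar, hclos, hinj, hedge, heven⟩ := hq
  set T : Finset ℕ :=
    Finset.image (fun c : ℕ × ℕ => c.2) ((q.toFinset).filter (fun c => dadj R x c.1 = true)) ∪
      Finset.image (fun v => 2 * e (v / 2)) ((Sset (x / 4)).filter (fun v => v % 2 = 0)) with hT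
  obtain ⟨y, hy1, hyA, hysA, hAadj, hEadj, hbit⟩ :=
    exists_witness S T (dadj R x (sig x)) ((gran q).toFinset)
  have hyq : y ∉ gran q := fun h => hyA (List.mem_toFinset.mpr h)
  have hysq : sig y ∉ gran q := fun h => hysA (List.mem_toFinset.mpr h)
  have hsx : sig x ∉ gdom q := by
    intro h
    obtain ⟨c, hc, hc1⟩ := mem_gdom.mp h
    have := hclos c hc
    apply hx
    exact mem_gdom.mpr ⟨(sig c.1, sig c.2), this, by rw [hc1, sig_sig]⟩
  -- adjacency of x to evens
  have hxev : ∀ v : ℕ, v % 2 = 0 → dadj R x v = decide (v ∈ Sset (x / 4)) :=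
    fun v hv => dadj_odd_even R hx1 hv
  -- key fact 1
  have f1 : ∀ c ∈ q, dadj S y c.2 = dadj R x c.1 := by
    intro c hc
    have hc2 : c.2 % 2 = 1 := (hpar c hc).2
    have hmem : c.2 ∈ (gran q).toFinset := List.mem_toFinset.mpr (mem_gran.mpr ⟨c, hc, rfl⟩)
    rw [hAadj c.2 hmem]
    have : c.2 ∈ T ↔ dadj R x c.1 = true := by
      constructor
      · intro hmemT
        rcases Finset.mem_union.mp hmemT with h | h
        · obtain ⟨c', hc', hcc'⟩ := Finset.mem_image.mp h
          rw [Finset.mem_filter, List.mem_toFinset] at hc'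
          have := (hinj c' hc'.1 c hc).mpr hcc'
          rw [← this]
          exact hc'.2
        · obtain ⟨v, hv, hvc⟩ := Finset.mem_image.mp h
          omega
      · intro hd
        exact Finset.mem_union_left _
          (Finset.mem_image.mpr ⟨c, Finset.mem_filter.mpr ⟨List.mem_toFinset.mpr hc, hd⟩, rfl⟩)
    cases hxc : dadj R x c.1 with
    | false => simp [hxc] at this ⊢; simpa using this
    | true => simp [hxc] at this ⊢; exact this
  -- key fact 2
  have f2 : ∀ n : ℕ, dadj S y (2 * e n) = dadj R x (2 * n) := by
    intro n
    rw [hEadj (2 * e n) (by omega)]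
    have : (2 * e n ∈ T) ↔ dadj R x (2 * n) = true := by
      constructor
      · intro hmemT
        rcases Finset.mem_union.mp hmemT with h | h
        · obtain ⟨c', hc', hcc'⟩ := Finset.mem_image.mp h
          rw [Finset.mem_filter, List.mem_toFinset] at hc'
          have hodd := (hpar c' hc'.1).2
          omega
        · obtain ⟨v, hv, hvc⟩ := Finset.mem_image.mp h
          rw [Finset.mem_filter] at hv
          have hev : e (v / 2) = e n := by omega
          have : v / 2 = n := e.injective hev
          have hv2 : v = 2 * n := by omega
          rw [hxev (2 * n) (by omega)]
          rw [← hv2]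
          simp [hv.1]
      · intro hd
        rw [hxev (2 * n) (by omega)] at hd
        have : (2 * n) ∈ Sset (x / 4) := of_decide_eq_true hd
        exact Finset.mem_union_right _
          (Finset.mem_image.mpr ⟨2 * n, Finset.mem_filter.mpr ⟨this, by omega⟩, by
            have h2n : 2 * n / 2 = n := by omega
            rw [h2n]⟩)
    cases hxc : dadj R x (2 * n) with
    | false => simp [hxc] at this ⊢; simpa using this
    | true => simp [hxc] at this ⊢; exact this
  refine ⟨y, ⟨?_, ?_, ?_, ?_, ?_⟩, hyq⟩
  · -- parity
    intro c hc
    rcases List.mem_cons.mp hc with rfl | hc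
    · exact ⟨hx1, hy1⟩
    rcases List.mem_cons.mp hc with rfl | hc
    · exact ⟨sig_odd_mod hx1, sig_odd_mod hy1⟩
    · exact hpar c hc
  · -- closure
    intro c hc
    rcases List.mem_cons.mp hc with rfl | hc
    · simp
    rcases List.mem_cons.mp hc with rfl | hc
    · simp only [sig_sig]
      exact List.mem_cons_self
    · exact List.mem_cons_of_mem _ (List.mem_cons_of_mem _ (hclos c hc))
  · -- injectivity
    have hxsx := sig_ne_self hx1
    have hysy := sig_ne_self hy1
    intro c hc c' hc'
    rcases List.mem_cons.mp hc with rfl | hc <;> rcases List.mem_cons.mp hc' with rfl | hc'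
    · simp
    · rcases List.mem_cons.mp hc' with rfl | hc'
      · simp only []
        constructor
        · intro h; exact absurd h.symm hxsx
        · intro h; exact absurd h.symm hysy
      · constructor
        · intro h; exact absurd (mem_gdom.mpr ⟨c', hc', h.symm⟩) hx
        · intro h; exact absurd (mem_gran.mpr ⟨c', hc', h.symm⟩) hyq
    · rcases List.mem_cons.mp hc with rfl | hc
      · constructor
        · intro h; exact absurd h hxsx
        · intro h; exact absurd h hysy
      · constructor
        · intro h; exact absurd (mem_gdom.mpr ⟨c, hc, h⟩) hx
        · intro h; exact absurd (mem_gran.mpr ⟨c, hc, h⟩) hyq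
    · rcases List.mem_cons.mp hc with rfl | hc <;> rcases List.mem_cons.mp hc' with rfl | hc'
      · simp
      · constructor
        · intro h; exact absurd (mem_gdom.mpr ⟨c', hc', h.symm⟩) hsx
        · intro h; exact absurd (mem_gran.mpr ⟨c', hc', h.symm⟩) hysq
      · constructor
        · intro h; exact absurd (mem_gdom.mpr ⟨c, hc, h⟩) hsx
        · intro h; exact absurd (mem_gran.mpr ⟨c, hc, h⟩) hysq
      · exact hinj c hc c' hc'
  · -- edges
    intro c hc c' hc'
    rcases List.mem_cons.mp hc with rfl | hc <;> rcases List.mem_cons.mp hc' with rfl | hc'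
    · simp [dadj_self]
    · rcases List.mem_cons.mp hc' with rfl | hc'
      · exact hbit.symm
      · exact (f1 c' hc').symm
    · rcases List.mem_cons.mp hc with rfl | hc
      · simp only []
        rw [dadj_sig_left, dadj_sig_left]
        exact hbit.symm
      · -- c old, c' = (x, y)
        rw [dadj_symm R hsR, dadj_symm S hsS]
        exact (f1 c hc).symm
    · rcases List.mem_cons.mp hc with rfl | hc <;> rcases List.mem_cons.mp hc' with rfl | hc'
      · simp [dadj_self]
      · -- c = (sig x, sig y), c' old
        simp only []
        rw [dadj_sig_left, dadj_sig_left]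
        have hcl := hclos c' hc'
        exact (f1 _ hcl).symm
      · -- c old, c' = (sig x, sig y)
        simp only []
        rw [dadj_symm R hsR, dadj_symm S hsS, dadj_sig_left, dadj_sig_left]
        have hcl := hclos c hc
        exact (f1 _ hcl).symm
      · exact hedge c hc c' hc'
  · -- even columns
    intro c hc n
    rcases List.mem_cons.mp hc with rfl | hc
    · exact (f2 n).symm
    rcases List.mem_cons.mp hc with rfl | hc
    · simp only []
      rw [dadj_sig_left, sig_even (by omega : (2 * n) % 2 = 0),
        dadj_sig_left, sig_even (by omega : (2 * e n) % 2 = 0)]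
      exact (f2 n).symm
    · exact heven c hc n

lemma extendP_dom {R S : (ℕ × ℕ) → Bool} {e : ℕ ≃ ℕ} {q : List (ℕ × ℕ)}
    (hsR : ∀ m n, R (m, n) = R (n, m)) (hsS : ∀ m n, S (m, n) = S (n, m))
    (hq : GoodP R S e q) (x : ℕ) (hx1 : x % 2 = 1) :
    ∃ q', GoodP R S e q' ∧ (∀ c ∈ q, c ∈ q') ∧ x ∈ gdom q' := by
  by_cases hx : x ∈ gdom q
  · exact ⟨q, hq, fun c h => h, hx⟩
  · obtain ⟨y, hy, _⟩ := extendP hsR hsS hq hx1 hx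
    exact ⟨_, hy, fun c h => List.mem_cons_of_mem _ (List.mem_cons_of_mem _ h),
      mem_gdom.mpr ⟨(x, y), List.mem_cons_self, rfl⟩⟩

lemma extendP_ran {R S : (ℕ × ℕ) → Bool} {e : ℕ ≃ ℕ} {q : List (ℕ × ℕ)}
    (hsR : ∀ m n, R (m, n) = R (n, m)) (hsS : ∀ m n, S (m, n) = S (n, m))
    (hq : GoodP R S e q) (y : ℕ) (hy1 : y % 2 = 1) :
    ∃ q', GoodP R S e q' ∧ (∀ c ∈ q, c ∈ q') ∧ y ∈ gran q' := by
  obtain ⟨q'', hq'', hsub, hdom⟩ := extendP_dom hsS hsR (goodP_flip hq) y hy1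
  refine ⟨q''.map Prod.swap, ?_, ?_, ?_⟩
  · have := goodP_flip hq''
    rwa [Equiv.symm_symm] at this
  · intro c hc
    have h1 : c.swap ∈ q.map Prod.swap := List.mem_map_of_mem hc
    have h2 := hsub _ h1
    have h3 : c.swap.swap ∈ q''.map Prod.swap := List.mem_map_of_mem h2
    simpa using h3
  · obtain ⟨c, hc, hc1⟩ := mem_gdom.mp hdom
    exact mem_gran.mpr ⟨c.swap, List.mem_map_of_mem hc, hc1⟩

noncomputable def QP (R S : (ℕ × ℕ) → Bool) (e : ℕ ≃ ℕ)
    (hsR : ∀ m n, R (m, n) = R (n, m)) (hsS : ∀ m n, S (m, n) = S (n, m)) :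
    ℕ → {q : List (ℕ × ℕ) // GoodP R S e q}
  | 0 => ⟨[], goodP_nil R S e⟩
  | s + 1 =>
    let p := QP R S e hsR hsS s
    let h1 := Classical.choose_spec (extendP_dom hsR hsS p.2 (2 * s + 1) (by omega))
    ⟨Classical.choose (extendP_ran hsR hsS h1.1 (2 * s + 1) (by omega)),
      (Classical.choose_spec (extendP_ran hsR hsS h1.1 (2 * s + 1) (by omega))).1⟩

section Phi
variable (R S : (ℕ × ℕ) → Bool) (e : ℕ ≃ ℕ)
    (hsR : ∀ m n, R (m, n) = R (n, m)) (hsS : ∀ m n, S (m, n) = S (n, m))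

lemma QP_succ_spec (s : ℕ) :
    (∀ c ∈ (QP R S e hsR hsS s).1, c ∈ (QP R S e hsR hsS (s + 1)).1) ∧
      (2 * s + 1) ∈ gdom (QP R S e hsR hsS (s + 1)).1 ∧
      (2 * s + 1) ∈ gran (QP R S e hsR hsS (s + 1)).1 := by
  have hd := Classical.choose_spec
    (extendP_dom hsR hsS (QP R S e hsR hsS s).2 (2 * s + 1) (by omega))
  have hr := Classical.choose_spec (extendP_ran hsR hsS hd.1 (2 * s + 1) (by omega))
  have hval : (QP R S e hsR hsS (s + 1)).1 =
      Classical.choose (extendP_ran hsR hsS hd.1 (2 * s + 1) (by omega)) := rfl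
  refine ⟨?_, ?_, ?_⟩
  · intro c hc
    rw [hval]
    exact hr.2.1 _ (hd.2.1 _ hc)
  · rw [hval]
    obtain ⟨c, hc, hc1⟩ := mem_gdom.mp hd.2.2
    exact mem_gdom.mpr ⟨c, hr.2.1 _ hc, hc1⟩
  · rw [hval]
    exact hr.2.2

lemma QP_mono {s t : ℕ} (hst : s ≤ t) :
    ∀ c ∈ (QP R S e hsR hsS s).1, c ∈ (QP R S e hsR hsS t).1 := by
  induction t with
  | zero =>
    intro c hc
    have : s = 0 := Nat.le_zero.mp hst
    rwa [← this]
  | succ t ih =>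
    intro c hc
    rcases Nat.lt_or_ge s (t + 1) with hlt | hge
    · exact (QP_succ_spec R S e hsR hsS t).1 c (ih (by omega) c hc)
    · have : s = t + 1 := by omega
      rwa [← this]

def PRel (c : ℕ × ℕ) : Prop := ∃ s, c ∈ (QP R S e hsR hsS s).1

lemma PRel_pair {c c' : ℕ × ℕ} (h : PRel R S e hsR hsS c) (h' : PRel R S e hsR hsS c') :
    (c.1 = c'.1 ↔ c.2 = c'.2) ∧ dadj R c.1 c'.1 = dadj S c.2 c'.2 := by
  obtain ⟨s, hs'⟩ := h
  obtain ⟨t, ht⟩ := h'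
  have h1 := QP_mono R S e hsR hsS (le_max_left s t) c hs'
  have h2 := QP_mono R S e hsR hsS (le_max_right s t) c' ht
  obtain ⟨_, _, hinj, hedge, _⟩ := (QP R S e hsR hsS (max s t)).2
  exact ⟨hinj c h1 c' h2, hedge c h1 c' h2⟩

lemma PRel_par {c : ℕ × ℕ} (h : PRel R S e hsR hsS c) : c.1 % 2 = 1 ∧ c.2 % 2 = 1 := by
  obtain ⟨s, hs'⟩ := h
  exact (QP R S e hsR hsS s).2.1 c hs'

lemma PRel_even {c : ℕ × ℕ} (h : PRel R S e hsR hsS c) (n : ℕ) :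
    dadj R c.1 (2 * n) = dadj S c.2 (2 * e n) := by
  obtain ⟨s, hs'⟩ := h
  exact (QP R S e hsR hsS s).2.2.2.2.2 c hs' n

lemma PRel_clos {c : ℕ × ℕ} (h : PRel R S e hsR hsS c) :
    PRel R S e hsR hsS (sig c.1, sig c.2) := by
  obtain ⟨s, hs'⟩ := h
  exact ⟨s, (QP R S e hsR hsS s).2.2.1 c hs'⟩

lemma PRel_total_dom (u : ℕ) (hu : u % 2 = 1) : ∃ y, PRel R S e hsR hsS (u, y) := by
  have h := (QP_succ_spec R S e hsR hsS (u / 2)).2.1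
  have hu2 : 2 * (u / 2) + 1 = u := by omega
  rw [hu2] at h
  obtain ⟨c, hc, hc1⟩ := mem_gdom.mp h
  have hcc : (u, c.2) = c := by rw [← hc1]
  exact ⟨c.2, ⟨u / 2 + 1, by rw [hcc]; exact hc⟩⟩

lemma PRel_total_ran (v : ℕ) (hv : v % 2 = 1) : ∃ x, PRel R S e hsR hsS (x, v) := by
  have h := (QP_succ_spec R S e hsR hsS (v / 2)).2.2
  have hv2 : 2 * (v / 2) + 1 = v := by omega
  rw [hv2] at h
  obtain ⟨c, hc, hc1⟩ := mem_gran.mp h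
  have hcc : (c.1, v) = c := by rw [← hc1]
  exact ⟨c.1, ⟨v / 2 + 1, by rw [hcc]; exact hc⟩⟩

noncomputable def phi (u : ℕ) : ℕ :=
  if h : u % 2 = 1 then Classical.choose (PRel_total_dom R S e hsR hsS u h)
  else 2 * e (u / 2)

noncomputable def phiInv (u : ℕ) : ℕ :=
  if h : u % 2 = 1 then Classical.choose (PRel_total_ran R S e hsR hsS u h)
  else 2 * e.symm (u / 2)

lemma phi_odd_mem {u : ℕ} (hu : u % 2 = 1) : PRel R S e hsR hsS (u, phi R S e hsR hsS u) := by
  rw [phi, dif_pos hu]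
  exact Classical.choose_spec (PRel_total_dom R S e hsR hsS u hu)

lemma phiInv_odd_mem {v : ℕ} (hv : v % 2 = 1) :
    PRel R S e hsR hsS (phiInv R S e hsR hsS v, v) := by
  rw [phiInv, dif_pos hv]
  exact Classical.choose_spec (PRel_total_ran R S e hsR hsS v hv)

lemma phi_even {u : ℕ} (hu : u % 2 = 0) : phi R S e hsR hsS u = 2 * e (u / 2) := by
  rw [phi, dif_neg (by omega)]

lemma phiInv_even {u : ℕ} (hu : u % 2 = 0) : phiInv R S e hsR hsS u = 2 * e.symm (u / 2) := by
  rw [phiInv, dif_neg (by omega)]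

lemma phiInv_phi (u : ℕ) : phiInv R S e hsR hsS (phi R S e hsR hsS u) = u := by
  rcases Nat.mod_two_eq_zero_or_one u with hu | hu
  · rw [phi_even R S e hsR hsS hu, phiInv_even R S e hsR hsS (by omega)]
    have h1 : 2 * e (u / 2) / 2 = e (u / 2) := by omega
    rw [h1, e.symm_apply_apply]
    omega
  · have h1 := phi_odd_mem R S e hsR hsS hu
    have hp : (phi R S e hsR hsS u) % 2 = 1 := (PRel_par R S e hsR hsS h1).2
    have h2 := phiInv_odd_mem R S e hsR hsS hp
    exact (PRel_pair R S e hsR hsS h2 h1).1.mpr rfl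

lemma phi_phiInv (u : ℕ) : phi R S e hsR hsS (phiInv R S e hsR hsS u) = u := by
  rcases Nat.mod_two_eq_zero_or_one u with hu | hu
  · rw [phiInv_even R S e hsR hsS hu, phi_even R S e hsR hsS (by omega)]
    have h1 : 2 * e.symm (u / 2) / 2 = e.symm (u / 2) := by omega
    rw [h1, e.apply_symm_apply]
    omega
  · have h1 := phiInv_odd_mem R S e hsR hsS hu
    have hp : (phiInv R S e hsR hsS u) % 2 = 1 := (PRel_par R S e hsR hsS h1).1
    have h2 := phi_odd_mem R S e hsR hsS hp
    exact (PRel_pair R S e hsR hsS h2 h1).1.mp rfl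

lemma phi_sig (u : ℕ) : phi R S e hsR hsS (sig u) = sig (phi R S e hsR hsS u) := by
  rcases Nat.mod_two_eq_zero_or_one u with hu | hu
  · rw [sig_even hu, sig_even]
    rw [phi_even R S e hsR hsS hu]
    omega
  · have h1 := phi_odd_mem R S e hsR hsS hu
    have h2 := PRel_clos R S e hsR hsS h1
    have h3 := phi_odd_mem R S e hsR hsS (sig_odd_mod hu)
    exact (PRel_pair R S e hsR hsS h3 h2).1.mp rfl

lemma phi_dadj (he : ∀ m n, R (m, n) = S (e m, e n)) (u v : ℕ) :
    dadj R u v = dadj S (phi R S e hsR hsS u) (phi R S e hsR hsS v) := by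
  rcases Nat.mod_two_eq_zero_or_one u with hu | hu <;>
    rcases Nat.mod_two_eq_zero_or_one v with hv | hv
  · by_cases huv : u = v
    · rw [huv, dadj_self, dadj_self]
    · have h2u : 2 * (u / 2) = u := by omega
      have h2v : 2 * (v / 2) = v := by omega
      rw [phi_even R S e hsR hsS hu, phi_even R S e hsR hsS hv]
      rw [dadj_even_even R huv hu hv]
      have hne : 2 * e (u / 2) ≠ 2 * e (v / 2) := by
        intro h
        have : e (u / 2) = e (v / 2) := by omega
        have := e.injective this
        omega
      rw [dadj_even_even S hne (by omega) (by omega)]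
      have d1 : 2 * e (u / 2) / 2 = e (u / 2) := by omega
      have d2 : 2 * e (v / 2) / 2 = e (v / 2) := by omega
      rw [d1, d2, he]
  · -- u even, v odd
    have h1 := phi_odd_mem R S e hsR hsS hv
    have := PRel_even R S e hsR hsS h1 (u / 2)
    have h2u : 2 * (u / 2) = u := by omega
    rw [h2u] at this
    rw [dadj_symm R hsR, dadj_symm S hsS]
    rw [phi_even R S e hsR hsS hu]
    exact this
  · -- u odd, v even
    have h1 := phi_odd_mem R S e hsR hsS hu
    have := PRel_even R S e hsR hsS h1 (v / 2)
    have h2v : 2 * (v / 2) = v := by omega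
    rw [h2v] at this
    rw [phi_even R S e hsR hsS hv]
    exact this
  · have h1 := phi_odd_mem R S e hsR hsS hu
    have h2 := phi_odd_mem R S e hsR hsS hv
    exact (PRel_pair R S e hsR hsS h1 h2).2

end Phi
section Main
variable {Γ : SimpleGraph ℕ} (hΓ : ExtensionProperty Γ)
include hΓ

lemma forward {R S : (ℕ × ℕ) → Bool}
    (hsR : ∀ m n, R (m, n) = R (n, m)) (hsS : ∀ m n, S (m, n) = S (n, m))
    (e : ℕ ≃ ℕ) (he : ∀ m n, R (m, n) = S (e m, e n)) :
    ∃ β : Γ ≃g Γ, ∀ n : ℕ, β (fmap Γ R n) = fmap Γ S (β n) := by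
  refine ⟨⟨⟨fun n => th Γ S (phi R S e hsR hsS (thinv Γ R n)),
            fun n => th Γ R (phiInv R S e hsR hsS (thinv Γ S n)), ?_, ?_⟩, ?_⟩, ?_⟩
  · intro n
    simp only []
    rw [thinv_th hΓ hsS, phiInv_phi, th_thinv hΓ hsR]
  · intro n
    simp only []
    rw [thinv_th hΓ hsR, phi_phiInv, th_thinv hΓ hsS]
  · intro a b
    simp only [Equiv.coe_fn_mk]
    rw [← th_adj hΓ hsS, ← phi_dadj R S e hsR hsS he, th_adj hΓ hsR,
      th_thinv hΓ hsR, th_thinv hΓ hsR]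
  · intro n
    show th Γ S (phi R S e hsR hsS (thinv Γ R (fmap Γ R n))) =
      fmap Γ S (th Γ S (phi R S e hsR hsS (thinv Γ R n)))
    rw [thinv_fmap hΓ hsR, phi_sig, ← fmap_th hΓ hsS]

lemma backward {R S : (ℕ × ℕ) → Bool}
    (hr : ∀ n, R (n, n) = false) (hsR : ∀ m n, R (m, n) = R (n, m))
    (hr' : ∀ n, S (n, n) = false) (hsS : ∀ m n, S (m, n) = S (n, m))
    (β : Γ ≃g Γ) (hcomm : ∀ n : ℕ, β (fmap Γ R n) = fmap Γ S (β n)) :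
    ∃ e : ℕ ≃ ℕ, ∀ m n : ℕ, R (m, n) = true ↔ S (e m, e n) = true := by
  have hφsig : ∀ u, thinv Γ S (β (th Γ R (sig u))) = sig (thinv Γ S (β (th Γ R u))) := by
    intro u
    rw [← fmap_th hΓ hsR, hcomm, thinv_fmap hΓ hsS]
  have hcomm' : ∀ n, β.symm (fmap Γ S n) = fmap Γ R (β.symm n) := by
    intro n
    have h0 := hcomm (β.symm n)
    rw [RelIso.apply_symm_apply] at h0
    rw [← h0, RelIso.symm_apply_apply]
  have hψsig : ∀ u, thinv Γ R (β.symm (th Γ S (sig u))) = sig (thinv Γ R (β.symm (th Γ S u))) := by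
    intro u
    rw [← fmap_th hΓ hsS, hcomm', thinv_fmap hΓ hsR]
  have hψφ : ∀ u, thinv Γ R (β.symm (th Γ S (thinv Γ S (β (th Γ R u))))) = u := by
    intro u
    rw [th_thinv hΓ hsS, RelIso.symm_apply_apply, thinv_th hΓ hsR]
  have hφψ : ∀ u, thinv Γ S (β (th Γ R (thinv Γ R (β.symm (th Γ S u))))) = u := by
    intro u
    rw [th_thinv hΓ hsR, RelIso.apply_symm_apply, thinv_th hΓ hsS]
  have hφev : ∀ m : ℕ, (thinv Γ S (β (th Γ R (2 * m)))) % 2 = 0 := by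
    intro m
    have h1 := hφsig (2 * m)
    rw [sig_even (by omega)] at h1
    exact sig_eq_self_iff.mp h1.symm
  have hψev : ∀ m : ℕ, (thinv Γ R (β.symm (th Γ S (2 * m)))) % 2 = 0 := by
    intro m
    have h1 := hψsig (2 * m)
    rw [sig_even (by omega)] at h1
    exact sig_eq_self_iff.mp h1.symm
  have hφadj : ∀ u v, dadj R u v = true ↔
      dadj S (thinv Γ S (β (th Γ R u))) (thinv Γ S (β (th Γ R v))) = true := by
    intro u v
    rw [th_adj hΓ hsR, th_adj hΓ hsS, th_thinv hΓ hsS, th_thinv hΓ hsS]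
    exact β.map_rel_iff.symm
  refine ⟨⟨fun m => thinv Γ S (β (th Γ R (2 * m))) / 2,
           fun m => thinv Γ R (β.symm (th Γ S (2 * m))) / 2, ?_, ?_⟩, ?_⟩
  · intro m
    simp only []
    have h1 := hφev m
    have h2 : 2 * (thinv Γ S (β (th Γ R (2 * m))) / 2) = thinv Γ S (β (th Γ R (2 * m))) := by
      omega
    rw [h2, hψφ (2 * m)]
    omega
  · intro m
    simp only []
    have h1 := hψev m
    have h2 : 2 * (thinv Γ R (β.symm (th Γ S (2 * m))) / 2) =
        thinv Γ R (β.symm (th Γ S (2 * m))) := by omega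
    rw [h2, hφψ (2 * m)]
    omega
  · intro m n
    simp only [Equiv.coe_fn_mk]
    by_cases hmn : m = n
    · subst hmn
      simp [hr m, hr' (thinv Γ S (β (th Γ R (2 * m))) / 2)]
    · have hRd : dadj R (2 * m) (2 * n) = R (m, n) := by
        rw [dadj_even_even R (by omega) (by omega) (by omega)]
        have d1 : 2 * m / 2 = m := by omega
        have d2 : 2 * n / 2 = n := by omega
        rw [d1, d2]
      have key := hφadj (2 * m) (2 * n)
      rw [hRd] at key
      have hXY : thinv Γ S (β (th Γ R (2 * m))) ≠ thinv Γ S (β (th Γ R (2 * n))) := by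
        intro h
        apply hmn
        have := congrArg (fun w => thinv Γ R (β.symm (th Γ S w))) h
        try simp only [] at this
        rw [hψφ (2 * m), hψφ (2 * n)] at this
        omega
      have hSd : dadj S (thinv Γ S (β (th Γ R (2 * m)))) (thinv Γ S (β (th Γ R (2 * n)))) =
          S (thinv Γ S (β (th Γ R (2 * m))) / 2, thinv Γ S (β (th Γ R (2 * n))) / 2) :=
        dadj_even_even S hXY (hφev m) (hφev n)
      rw [hSd] at key
      exact key

end Main
end Stmt12

/-- Let `Γ` be a copy of the random graph on `ℕ` (a simple graph with the
extension property). The isomorphism relation on countable simple graphs, coded as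
elements of the Polish space `(ℕ × ℕ) → Bool`, is Borel reducible to the conjugacy
relation on `Aut(Γ)`, automorphisms being coded as elements of the Polish space `ℕ → ℕ`. -/
theorem stmt_12 (Γ : SimpleGraph ℕ) (hΓ : ExtensionProperty Γ) :
    ∃ f : ((ℕ × ℕ) → Bool) → (ℕ → ℕ),
      Measurable f ∧
      (∀ R : (ℕ × ℕ) → Bool, (∀ n, R (n, n) = false) → (∀ m n, R (m, n) = R (n, m)) →
        ∃ g : Γ ≃g Γ, ⇑g = f R) ∧
      (∀ R S : (ℕ × ℕ) → Bool,
        (∀ n, R (n, n) = false) → (∀ m n, R (m, n) = R (n, m)) →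
        (∀ n, S (n, n) = false) → (∀ m n, S (m, n) = S (n, m)) →
        ((∃ e : ℕ ≃ ℕ, ∀ m n : ℕ, R (m, n) = true ↔ S (e m, e n) = true) ↔
          ∃ β : Γ ≃g Γ, ∀ n : ℕ, β (f R n) = f S (β n))) := by
  classical
  refine ⟨Stmt12.fmap Γ, Stmt12.meas_fmap Γ, ?_, ?_⟩
  · intro R hr hs
    exact ⟨⟨⟨Stmt12.fmap Γ R, Stmt12.fmap Γ R, Stmt12.fmap_invol hΓ hs,
      Stmt12.fmap_invol hΓ hs⟩, fun {a b} => Stmt12.fmap_adj hΓ hs a b⟩, rfl⟩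
  · intro R S hr hsR hr' hsS
    constructor
    · rintro ⟨e, he0⟩
      have he : ∀ m n, R (m, n) = S (e m, e n) := by
        intro m n
        have h0 := he0 m n
        cases h1 : R (m, n) <;> cases h2 : S (e m, e n) <;> simp_all
      exact Stmt12.forward hΓ hsR hsS e he
    · rintro ⟨β, hcomm⟩
      exact Stmt12.backward hΓ hr hsR hr' hsS β hcomm
end

section
/- Two permutations f and g of ℕ are conjugate in the symmetric group of ℕ if and only if they have the same cycle type, i.e., if and only if for every k ∈ ℕ with k ≥ 1 the set of orbits of f of cardinality k and the set of orbits of g of cardinality k have the same cardinality, and the set of infinite orbits of f and the set of infinite orbits of g have the same cardinality. -/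
/-- The orbit of `n` under the permutation `f` of `ℕ` (the ℤ-orbit `{f^k n : k ∈ ℤ}`). -/
def permOrbit (f : Equiv.Perm ℕ) (n : ℕ) : Set ℕ :=
  Set.range (fun k : ℤ => (f ^ k) n)

/-- The set of orbits of `f` having exactly `k` elements. -/
def orbitsOfSize (f : Equiv.Perm ℕ) (k : ℕ) : Set (Set ℕ) :=
  {s : Set ℕ | (∃ n : ℕ, s = permOrbit f n) ∧ s.Finite ∧ s.ncard = k}

/-- The set of infinite orbits of `f`. -/
def infiniteOrbits (f : Equiv.Perm ℕ) : Set (Set ℕ) :=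
  {s : Set ℕ | (∃ n : ℕ, s = permOrbit f n) ∧ s.Infinite}

namespace Stmt13

open Function Set

open scoped Classical

lemma mem_orbit_iff {f : Equiv.Perm ℕ} {n m : ℕ} :
    m ∈ permOrbit f n ↔ ∃ k : ℤ, (f ^ k) n = m := Iff.rfl

lemma self_mem_orbit (f : Equiv.Perm ℕ) (n : ℕ) : n ∈ permOrbit f n :=
  ⟨0, by simp⟩

lemma orbit_eq_of_mem {f : Equiv.Perm ℕ} {n m : ℕ} (h : m ∈ permOrbit f n) :
    permOrbit f m = permOrbit f n := by
  obtain ⟨k, rfl⟩ := h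
  ext x
  simp only [permOrbit, Set.mem_range]
  constructor
  · rintro ⟨j, rfl⟩
    exact ⟨j + k, by rw [zpow_add, Equiv.Perm.mul_apply]⟩
  · rintro ⟨j, rfl⟩
    refine ⟨j - k, ?_⟩
    rw [← Equiv.Perm.mul_apply, ← zpow_add, sub_add_cancel]

lemma zpow_fix_iff {f : Equiv.Perm ℕ} {b : ℕ} {d : ℤ} :
    (f ^ d) b = b ↔ (Function.minimalPeriod f b : ℤ) ∣ d := by
  constructor
  · intro h
    have hnat : (f ^ d.natAbs) b = b := by
      rcases Int.natAbs_eq d with he | he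
      · rw [he, zpow_natCast] at h; exact h
      · rw [he, zpow_neg, zpow_natCast] at h
        have := congrArg (⇑(f ^ d.natAbs)) h
        simpa using this.symm
    have hper : Function.IsPeriodicPt f d.natAbs b := by
      rw [Function.IsPeriodicPt, Function.IsFixedPt, Equiv.Perm.iterate_eq_pow]
      exact hnat
    exact Int.dvd_natAbs.mp (Int.natCast_dvd_natCast.mpr hper.minimalPeriod_dvd)
  · rintro ⟨q, rfl⟩
    have hfix : (f ^ (Function.minimalPeriod f b)) b = b := by
      have := Function.isPeriodicPt_minimalPeriod f b
      rwa [Function.IsPeriodicPt, Function.IsFixedPt, Equiv.Perm.iterate_eq_pow] at this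
    rw [zpow_mul, zpow_natCast]
    exact Equiv.Perm.zpow_apply_eq_self_of_apply_eq_self hfix q

lemma orbit_eq_image {f : Equiv.Perm ℕ} {b : ℕ} (hb : b ∈ Function.periodicPts f) :
    permOrbit f b = (fun j : ℕ => (f ^ j) b) '' (Set.Iio (Function.minimalPeriod f b)) := by
  set m := Function.minimalPeriod f b with hm
  have hmpos : 0 < m := hm ▸ Function.minimalPeriod_pos_of_mem_periodicPts hb
  clear_value m
  ext x
  constructor
  · rintro ⟨k, rfl⟩
    have h0 : 0 ≤ k % (m : ℤ) := Int.emod_nonneg k (by exact_mod_cast hmpos.ne')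
    have hlt : k % (m : ℤ) < (m : ℤ) := Int.emod_lt_of_pos k (by exact_mod_cast hmpos)
    refine ⟨(k % (m : ℤ)).toNat, Set.mem_Iio.mpr (by omega), ?_⟩
    have hdvd : (m : ℤ) ∣ (k - k % (m : ℤ)) :=
      ⟨k / m, by have := Int.mul_ediv_add_emod k (m : ℤ); linarith⟩
    have hfixsub : (f ^ (k - k % (m : ℤ))) b = b := zpow_fix_iff.mpr (hm ▸ hdvd)
    show (f ^ ((k % (m : ℤ)).toNat)) b = (f ^ k) b
    rw [← zpow_natCast, Int.toNat_of_nonneg h0]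
    calc (f ^ (k % (m : ℤ))) b = (f ^ (k % (m : ℤ))) ((f ^ (k - k % (m : ℤ))) b) := by
            rw [hfixsub]
      _ = (f ^ k) b := by
            rw [← Equiv.Perm.mul_apply, ← zpow_add]
            congr 1
            ring_nf
  · rintro ⟨j, _, rfl⟩
    exact ⟨(j : ℤ), by simp⟩

lemma orbit_finite_of_periodic {f : Equiv.Perm ℕ} {b : ℕ} (hb : b ∈ Function.periodicPts f) :
    (permOrbit f b).Finite := by
  rw [orbit_eq_image hb]
  exact (Set.finite_Iio _).image _

lemma orbit_ncard {f : Equiv.Perm ℕ} {b : ℕ} (hb : b ∈ Function.periodicPts f) :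
    (permOrbit f b).ncard = Function.minimalPeriod f b := by
  rw [orbit_eq_image hb]
  have hfun : (fun j : ℕ => (f ^ j) b) = (f^[·] b) := by
    funext j; rw [Equiv.Perm.iterate_eq_pow]
  rw [hfun, Set.ncard_image_of_injOn Function.iterate_injOn_Iio_minimalPeriod]
  rw [← Finset.coe_range, Set.ncard_coe_finset, Finset.card_range]

lemma periodic_of_orbit_finite {f : Equiv.Perm ℕ} {b : ℕ} (h : (permOrbit f b).Finite) :
    b ∈ Function.periodicPts f := by
  have hni : ¬ Function.Injective (fun n : ℕ => (f ^ n) b) := by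
    intro hinj
    have hsub : Set.range (fun n : ℕ => (f ^ n) b) ⊆ permOrbit f b := by
      rintro x ⟨n, rfl⟩
      exact ⟨(n : ℤ), by simp⟩
    exact Set.infinite_range_of_injective hinj (h.subset hsub)
  rw [Function.not_injective_iff] at hni
  obtain ⟨i, j, hij, hne⟩ := hni
  have key : ∀ i j : ℕ, i < j → (f ^ i) b = (f ^ j) b → b ∈ Function.periodicPts f := by
    intro i j hlt hij
    have h1 : (f ^ i) ((f ^ (j - i)) b) = (f ^ i) b := by
      rw [← Equiv.Perm.mul_apply, ← pow_add, Nat.add_sub_cancel' hlt.le]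
      exact hij.symm
    have h2 : (f ^ (j - i)) b = b := (Equiv.injective _) h1
    have hper : Function.IsPeriodicPt f (j - i) b := by
      rw [Function.IsPeriodicPt, Function.IsFixedPt, Equiv.Perm.iterate_eq_pow]
      exact h2
    exact Function.mk_mem_periodicPts (by omega) hper
  rcases Nat.lt_or_ge i j with hlt | hge
  · exact key i j hlt hij
  · exact key j i (by omega) hij.symm

lemma orbit_infinite_of_not_periodic {f : Equiv.Perm ℕ} {b : ℕ}
    (h : b ∉ Function.periodicPts f) : (permOrbit f b).Infinite := by
  apply Set.infinite_range_of_injective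
  intro k j hkj
  have h1 : (f ^ (k - j)) b = b := by
    have := congrArg (⇑(f ^ (-j : ℤ))) hkj
    rw [← Equiv.Perm.mul_apply, ← Equiv.Perm.mul_apply, ← zpow_add, ← zpow_add] at this
    rw [neg_add_cancel, zpow_zero] at this
    simp only [Equiv.Perm.coe_one, id_eq] at this
    rw [show -j + k = k - j by ring] at this
    rw [this]
  have := zpow_fix_iff.mp h1
  rw [Function.minimalPeriod_eq_zero_of_notMem_periodicPts h] at this
  simpa [sub_eq_zero] using this

/-- transfer of stabilizers -/
lemma transfer {f g : Equiv.Perm ℕ} {b c : ℕ}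
    (hmp : Function.minimalPeriod f b = Function.minimalPeriod g c)
    {a a' : ℤ} (h : (f ^ a) b = (f ^ a') b) : (g ^ a) c = (g ^ a') c := by
  have h1 : (f ^ (a - a')) b = b := by
    have := congrArg (⇑(f ^ (-a' : ℤ))) h
    rw [← Equiv.Perm.mul_apply, ← Equiv.Perm.mul_apply, ← zpow_add, ← zpow_add] at this
    rw [neg_add_cancel, zpow_zero] at this
    simp only [Equiv.Perm.coe_one, id_eq] at this
    rw [show -a' + a = a - a' by ring] at this
    rw [this]
  have h2 : (g ^ (a - a')) c = c := zpow_fix_iff.mpr (hmp ▸ zpow_fix_iff.mp h1)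
  calc (g ^ a) c = (g ^ a') ((g ^ (a - a')) c) := by
        rw [← Equiv.Perm.mul_apply, ← zpow_add]
        congr 1
        ring_nf
    _ = (g ^ a') c := by rw [h2]

lemma mp_eq_of_fin {f g : Equiv.Perm ℕ} {b c : ℕ}
    (hf : (permOrbit f b).Finite) (hg : (permOrbit g c).Finite)
    (hcard : (permOrbit f b).ncard = (permOrbit g c).ncard) :
    Function.minimalPeriod f b = Function.minimalPeriod g c := by
  rw [← orbit_ncard (periodic_of_orbit_finite hf), ← orbit_ncard (periodic_of_orbit_finite hg)]
  exact hcard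

lemma mp_eq_of_inf {f g : Equiv.Perm ℕ} {b c : ℕ}
    (hf : ¬ (permOrbit f b).Finite) (hg : ¬ (permOrbit g c).Finite) :
    Function.minimalPeriod f b = Function.minimalPeriod g c := by
  rw [Function.minimalPeriod_eq_zero_of_notMem_periodicPts
        (fun hp => hf (orbit_finite_of_periodic hp)),
      Function.minimalPeriod_eq_zero_of_notMem_periodicPts
        (fun hp => hg (orbit_finite_of_periodic hp))]

/-! ### Base points and exponents -/

noncomputable def bp (f : Equiv.Perm ℕ) (s : Set ℕ) : ℕ :=
  if h : ∃ n, s = permOrbit f n then h.choose else 0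

lemma bp_spec {f : Equiv.Perm ℕ} {s : Set ℕ} (h : ∃ n, s = permOrbit f n) :
    s = permOrbit f (bp f s) := by
  rw [bp, dif_pos h]
  exact h.choose_spec

noncomputable def expo (f : Equiv.Perm ℕ) (b n : ℕ) : ℤ :=
  if h : ∃ k : ℤ, (f ^ k) b = n then h.choose else 0

lemma expo_spec {f : Equiv.Perm ℕ} {b n : ℕ} (h : n ∈ permOrbit f b) :
    (f ^ expo f b n) b = n := by
  have h' : ∃ k : ℤ, (f ^ k) b = n := h
  rw [expo, dif_pos h']
  exact h'.choose_spec

/-! ### The target orbit map -/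

noncomputable def tor (f g : Equiv.Perm ℕ)
    (E : ∀ k : ℕ, orbitsOfSize f k ≃ orbitsOfSize g k)
    (EI : infiniteOrbits f ≃ infiniteOrbits g) (s : Set ℕ) : Set ℕ :=
  if h : ∃ n, s = permOrbit f n then
    if hfin : s.Finite then (E s.ncard ⟨s, h, hfin, rfl⟩ : Set ℕ)
    else (EI ⟨s, h, hfin⟩ : Set ℕ)
  else ∅

lemma tor_fin_eq {f g : Equiv.Perm ℕ} {E} {EI} {s : Set ℕ}
    (h : ∃ n, s = permOrbit f n) (hfin : s.Finite) :
    tor f g E EI s = (E s.ncard ⟨s, h, hfin, rfl⟩ : Set ℕ) := by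
  simp only [tor]
  rw [dif_pos h, dif_pos hfin]

lemma tor_inf_eq {f g : Equiv.Perm ℕ} {E} {EI} {s : Set ℕ}
    (h : ∃ n, s = permOrbit f n) (hfin : ¬ s.Finite) :
    tor f g E EI s = (EI ⟨s, h, hfin⟩ : Set ℕ) := by
  simp only [tor]
  rw [dif_pos h, dif_neg hfin]

lemma tor_spec_fin {f g : Equiv.Perm ℕ} {E} {EI} {s : Set ℕ}
    (h : ∃ n, s = permOrbit f n) (hfin : s.Finite) :
    tor f g E EI s ∈ orbitsOfSize g s.ncard := by
  rw [tor_fin_eq h hfin]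
  exact (E s.ncard ⟨s, h, hfin, rfl⟩).2

lemma tor_spec_inf {f g : Equiv.Perm ℕ} {E} {EI} {s : Set ℕ}
    (h : ∃ n, s = permOrbit f n) (hfin : ¬ s.Finite) :
    tor f g E EI s ∈ infiniteOrbits g := by
  rw [tor_inf_eq h hfin]
  exact (EI ⟨s, h, hfin⟩).2

lemma tor_orbit {f g : Equiv.Perm ℕ} {E} {EI} {s : Set ℕ}
    (h : ∃ n, s = permOrbit f n) : ∃ m, tor f g E EI s = permOrbit g m := by
  by_cases hfin : s.Finite
  · exact (tor_spec_fin h hfin).1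
  · exact (tor_spec_inf h hfin).1

lemma Esymm_coe {f g : Equiv.Perm ℕ} (E : ∀ k : ℕ, orbitsOfSize f k ≃ orbitsOfSize g k)
    {k k' : ℕ} (hk : k' = k) (x : orbitsOfSize f k) {t : Set ℕ} (ht : t = (E k x : Set ℕ))
    (pf : t ∈ orbitsOfSize g k') :
    (((E k').symm ⟨t, pf⟩ : orbitsOfSize f k') : Set ℕ) = (x : Set ℕ) := by
  subst ht
  subst hk
  have h1 : (⟨(E k' x : Set ℕ), pf⟩ : orbitsOfSize g k') = E k' x := Subtype.ext rfl
  rw [h1, Equiv.symm_apply_apply]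

lemma EIsymm_coe {f g : Equiv.Perm ℕ} (EI : infiniteOrbits f ≃ infiniteOrbits g)
    (y : infiniteOrbits f) {t : Set ℕ} (ht : t = (EI y : Set ℕ))
    (pf : t ∈ infiniteOrbits g) :
    ((EI.symm ⟨t, pf⟩ : infiniteOrbits f) : Set ℕ) = (y : Set ℕ) := by
  subst ht
  have h1 : (⟨(EI y : Set ℕ), pf⟩ : infiniteOrbits g) = EI y := Subtype.ext rfl
  rw [h1, Equiv.symm_apply_apply]

lemma tor_roundtrip {f g : Equiv.Perm ℕ} (E : ∀ k : ℕ, orbitsOfSize f k ≃ orbitsOfSize g k)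
    (EI : infiniteOrbits f ≃ infiniteOrbits g) {s : Set ℕ} (h : ∃ n, s = permOrbit f n) :
    tor g f (fun k => (E k).symm) EI.symm (tor f g E EI s) = s := by
  by_cases hfin : s.Finite
  · obtain ⟨ht1, ht2, ht3⟩ := tor_spec_fin (E := E) (EI := EI) h hfin
    rw [tor_fin_eq (E := fun k => (E k).symm) (EI := EI.symm) ht1 ht2]
    exact Esymm_coe E ht3 ⟨s, h, hfin, rfl⟩ (tor_fin_eq h hfin) _
  · obtain ⟨ht1, ht2⟩ := tor_spec_inf (E := E) (EI := EI) h hfin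
    rw [tor_inf_eq (E := fun k => (E k).symm) (EI := EI.symm) ht1 (fun c => ht2 c)]
    exact EIsymm_coe EI ⟨s, h, hfin⟩ (tor_inf_eq h hfin) _


/-! ### The conjugating map -/

noncomputable def conj (f g : Equiv.Perm ℕ)
    (E : ∀ k : ℕ, orbitsOfSize f k ≃ orbitsOfSize g k)
    (EI : infiniteOrbits f ≃ infiniteOrbits g) (n : ℕ) : ℕ :=
  (g ^ expo f (bp f (permOrbit f n)) n) (bp g (tor f g E EI (permOrbit f n)))

lemma mp_bp {f g : Equiv.Perm ℕ} {E} {EI} {s : Set ℕ} (h : ∃ n, s = permOrbit f n) :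
    Function.minimalPeriod f (bp f s) =
      Function.minimalPeriod g (bp g (tor f g E EI s)) := by
  have hsb := bp_spec h
  have htb := bp_spec (tor_orbit (E := E) (EI := EI) h)
  by_cases hfin : s.Finite
  · obtain ⟨_, ht2, ht3⟩ := tor_spec_fin (E := E) (EI := EI) h hfin
    apply mp_eq_of_fin
    · rw [← hsb]; exact hfin
    · rw [← htb]; exact ht2
    · rw [← hsb, ← htb]; exact ht3.symm
  · obtain ⟨_, ht2⟩ := tor_spec_inf (E := E) (EI := EI) h hfin
    apply mp_eq_of_inf
    · rw [← hsb]; exact hfin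
    · rw [← htb]; exact fun hfin' => ht2 hfin'

lemma conj_equivariant (f g : Equiv.Perm ℕ)
    (E : ∀ k : ℕ, orbitsOfSize f k ≃ orbitsOfSize g k)
    (EI : infiniteOrbits f ≃ infiniteOrbits g) (n : ℕ) :
    conj f g E EI (f n) = g (conj f g E EI n) := by
  have horb : permOrbit f (f n) = permOrbit f n :=
    orbit_eq_of_mem ⟨1, by simp⟩
  have h : ∃ m, permOrbit f n = permOrbit f m := ⟨n, rfl⟩
  have hsb := bp_spec h
  have hmp := mp_bp (g := g) (E := E) (EI := EI) h
  have hn : n ∈ permOrbit f (bp f (permOrbit f n)) := hsb ▸ self_mem_orbit f n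
  have hfn : f n ∈ permOrbit f (bp f (permOrbit f n)) := by
    rw [← hsb]; exact ⟨1, by simp⟩
  have e1 : (f ^ expo f (bp f (permOrbit f n)) (f n)) (bp f (permOrbit f n)) = f n :=
    expo_spec hfn
  have e2 : (f ^ (expo f (bp f (permOrbit f n)) n + 1)) (bp f (permOrbit f n)) = f n := by
    rw [show expo f (bp f (permOrbit f n)) n + 1 = 1 + expo f (bp f (permOrbit f n)) n
      by ring, zpow_add, Equiv.Perm.mul_apply, zpow_one, expo_spec hn]
  have e3 := transfer (c := bp g (tor f g E EI (permOrbit f n))) hmp (e1.trans e2.symm)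
  show (g ^ expo f (bp f (permOrbit f (f n))) (f n))
      (bp g (tor f g E EI (permOrbit f (f n)))) = g (conj f g E EI n)
  rw [horb, e3]
  show _ = g ((g ^ expo f (bp f (permOrbit f n)) n) (bp g (tor f g E EI (permOrbit f n))))
  rw [show expo f (bp f (permOrbit f n)) n + 1 = 1 + expo f (bp f (permOrbit f n)) n
    by ring, zpow_add, Equiv.Perm.mul_apply, zpow_one]

lemma conj_leftInv (f g : Equiv.Perm ℕ)
    (E : ∀ k : ℕ, orbitsOfSize f k ≃ orbitsOfSize g k)
    (EI : infiniteOrbits f ≃ infiniteOrbits g) (n : ℕ) :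
    conj g f (fun k => (E k).symm) EI.symm (conj f g E EI n) = n := by
  have h : ∃ m, permOrbit f n = permOrbit f m := ⟨n, rfl⟩
  have hsb := bp_spec h
  have htb := bp_spec (tor_orbit (E := E) (EI := EI) h)
  have hmp := mp_bp (g := g) (E := E) (EI := EI) h
  set m := conj f g E EI n with hm
  have hm_mem : m ∈ permOrbit g (bp g (tor f g E EI (permOrbit f n))) :=
    ⟨expo f (bp f (permOrbit f n)) n, rfl⟩
  have horb : permOrbit g m = tor f g E EI (permOrbit f n) := by
    rw [orbit_eq_of_mem hm_mem, ← htb]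
  show (f ^ expo g (bp g (permOrbit g m)) m)
      (bp f (tor g f (fun k => (E k).symm) EI.symm (permOrbit g m))) = n
  rw [horb, tor_roundtrip E EI h]
  have e1 : (g ^ expo g (bp g (tor f g E EI (permOrbit f n))) m)
      (bp g (tor f g E EI (permOrbit f n))) = m := expo_spec hm_mem
  have e2 : m = (g ^ expo f (bp f (permOrbit f n)) n)
      (bp g (tor f g E EI (permOrbit f n))) := hm
  have e3 := transfer (f := g) (g := f) (c := bp f (permOrbit f n)) hmp.symm (e1.trans e2)
  rw [e3]
  exact expo_spec (hsb ▸ self_mem_orbit f n)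

lemma orbitsOfSize_zero_isEmpty (f : Equiv.Perm ℕ) : IsEmpty ↥(orbitsOfSize f 0) := by
  constructor
  rintro ⟨s, ⟨n, rfl⟩, hfin, h0⟩
  have hmem := self_mem_orbit f n
  rw [(Set.ncard_eq_zero hfin).mp h0] at hmem
  exact hmem

/-! ### Forward direction -/

lemma semiconj_zpow {f g h : Equiv.Perm ℕ} (hh : ∀ n, h (f n) = g (h n)) (k : ℤ) (n : ℕ) :
    h ((f ^ k) n) = (g ^ k) (h n) := by
  have hmul : h * f = g * h := Equiv.ext fun m => by
    simpa [Equiv.Perm.mul_apply] using hh m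
  have hg : g = h * f * h⁻¹ := by
    rw [eq_mul_inv_iff_mul_eq]
    exact hmul.symm
  have hk : g ^ k = h * f ^ k * h⁻¹ := by
    rw [hg, ← MulAut.conj_apply, ← map_zpow, MulAut.conj_apply]
  rw [hk]
  simp [Equiv.Perm.mul_apply]

lemma image_orbit {f g h : Equiv.Perm ℕ} (hh : ∀ n, h (f n) = g (h n)) (n : ℕ) :
    ⇑h '' permOrbit f n = permOrbit g (h n) := by
  ext x
  constructor
  · rintro ⟨y, ⟨k, rfl⟩, rfl⟩
    exact ⟨k, (semiconj_zpow hh k n).symm⟩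
  · rintro ⟨k, rfl⟩
    exact ⟨(f ^ k) n, ⟨k, rfl⟩, semiconj_zpow hh k n⟩

lemma symm_semiconj {f g h : Equiv.Perm ℕ} (hh : ∀ n, h (f n) = g (h n)) (n : ℕ) :
    h.symm (g n) = f (h.symm n) := by
  apply h.injective
  rw [Equiv.apply_symm_apply, hh, Equiv.apply_symm_apply]

lemma image_mem_size {f g h : Equiv.Perm ℕ} (hh : ∀ n, h (f n) = g (h n)) {k : ℕ}
    {s : Set ℕ} (hs : s ∈ orbitsOfSize f k) : ⇑h '' s ∈ orbitsOfSize g k := by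
  obtain ⟨⟨n, rfl⟩, hfin, hcard⟩ := hs
  refine ⟨⟨h n, image_orbit hh n⟩, hfin.image _, ?_⟩
  rw [Set.ncard_image_of_injective _ h.injective]
  exact hcard

lemma image_mem_inf {f g h : Equiv.Perm ℕ} (hh : ∀ n, h (f n) = g (h n))
    {s : Set ℕ} (hs : s ∈ infiniteOrbits f) : ⇑h '' s ∈ infiniteOrbits g := by
  obtain ⟨⟨n, rfl⟩, hinf⟩ := hs
  exact ⟨⟨h n, image_orbit hh n⟩, hinf.image (h.injective.injOn)⟩

noncomputable def sizeEquiv {f g h : Equiv.Perm ℕ} (hh : ∀ n, h (f n) = g (h n)) (k : ℕ) :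
    orbitsOfSize f k ≃ orbitsOfSize g k where
  toFun s := ⟨⇑h '' s, image_mem_size hh s.2⟩
  invFun t := ⟨⇑h.symm '' t, image_mem_size (symm_semiconj hh) t.2⟩
  left_inv s := Subtype.ext (Equiv.symm_image_image h s)
  right_inv t := Subtype.ext (Equiv.image_symm_image h t)

noncomputable def infEquiv {f g h : Equiv.Perm ℕ} (hh : ∀ n, h (f n) = g (h n)) :
    infiniteOrbits f ≃ infiniteOrbits g where
  toFun s := ⟨⇑h '' s, image_mem_inf hh s.2⟩
  invFun t := ⟨⇑h.symm '' t, image_mem_inf (symm_semiconj hh) t.2⟩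
  left_inv s := Subtype.ext (Equiv.symm_image_image h s)
  right_inv t := Subtype.ext (Equiv.image_symm_image h t)

end Stmt13

/-- Two permutations of `ℕ` are conjugate in the symmetric group of `ℕ`
iff they have the same cycle type: for every `k ≥ 1` they have equally many orbits of
cardinality `k`, and they have equally many infinite orbits. -/
theorem stmt_13 (f g : Equiv.Perm ℕ) :
    (∃ h : Equiv.Perm ℕ, ∀ n : ℕ, h (f n) = g (h n)) ↔
      ((∀ k : ℕ, 1 ≤ k → Nonempty (orbitsOfSize f k ≃ orbitsOfSize g k)) ∧
        Nonempty (infiniteOrbits f ≃ infiniteOrbits g)) := by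
  constructor
  · rintro ⟨h, hh⟩
    exact ⟨fun k _ => ⟨Stmt13.sizeEquiv hh k⟩, ⟨Stmt13.infEquiv hh⟩⟩
  · rintro ⟨H1, H2⟩
    haveI := Stmt13.orbitsOfSize_zero_isEmpty f
    haveI := Stmt13.orbitsOfSize_zero_isEmpty g
    let E : ∀ k : ℕ, orbitsOfSize f k ≃ orbitsOfSize g k := fun k =>
      match k with
      | 0 => Equiv.equivOfIsEmpty _ _
      | (k' + 1) => (H1 (k' + 1) (Nat.succ_le_succ (Nat.zero_le _))).some
    let EI : infiniteOrbits f ≃ infiniteOrbits g := H2.some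
    have hE : (fun k => ((E k).symm).symm) = E := funext fun k => Equiv.symm_symm _
    have hEI : EI.symm.symm = EI := Equiv.symm_symm _
    refine ⟨⟨Stmt13.conj f g E EI, Stmt13.conj g f (fun k => (E k).symm) EI.symm,
      Stmt13.conj_leftInv f g E EI, fun n => ?_⟩, fun n => ?_⟩
    · have := Stmt13.conj_leftInv g f (fun k => (E k).symm) EI.symm n
      rwa [hE, hEI] at this
    · exact Stmt13.conj_equivariant f g E EI n
end
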